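/- arXiv:2509.17600 — 4 statements merged into one kernel-verified Lean document; each statement's English description precedes it below -/
import Mathlib

section
/- Let f : [T₀,∞) → (0,∞) be C³, positive, strictly increasing, with log f' concave on [T₀,∞), and let μ be a probability measure on ℝ. Define G(x) = f⁻¹(∫_ℝ f(x + |y|) dμ(y)), assuming G(x) < ∞ for all x ≥ T₀ and the integrals are well-defined. Then G'(x) ≤ 1 for all x ≥ T₀. -/
open Set MeasureTheory Topology Filter

theorem G_deriv_le_one
    (T₀ : ℝ) (f finv G : ℝ → ℝ) (μ : Measure ℝ) [IsProbabilityMeasure μ]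
    (hC3 : ContDiffOn ℝ 3 f (Ici T₀))
    (hpos : ∀ x ≥ T₀, 0 < f x)
    (hmono : StrictMonoOn f (Ici T₀))
    (hderiv_pos : ∀ x ≥ T₀, 0 < deriv f x)
    (hlogconc : ConcaveOn ℝ (Ici T₀) (fun t => Real.log (deriv f t)))
    (hinv_left : ∀ x ≥ T₀, finv (f x) = x)
    (hinv_right : ∀ t ∈ f '' (Ici T₀), f (finv t) = t ∧ finv t ∈ Ici T₀)
    (hint : ∀ x ≥ T₀, Integrable (fun y => f (x + |y|)) μ)
    (hint' : ∀ x ≥ T₀, Integrable (fun y => deriv f (x + |y|)) μ)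
    (hGdef : ∀ x ≥ T₀, G x = finv (∫ y, f (x + |y|) ∂μ))
    (hrange : ∀ x ≥ T₀, (∫ y, f (x + |y|) ∂μ) ∈ f '' (Ici T₀)) :
    ∀ x ≥ T₀, deriv G x ≤ 1 := by
  -- f is differentiable at interior points
  have hdiff : ∀ s, T₀ < s → HasDerivAt f (deriv f s) s := by
    intro s hs
    have h1 : DifferentiableOn ℝ f (Ici T₀) :=
      hC3.differentiableOn (by norm_num)
    have := (h1 s (le_of_lt hs)).differentiableAt (Ici_mem_nhds hs)
    exact this.hasDerivAt
  -- continuity of f on Ici T₀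
  have hcont : ContinuousOn f (Ici T₀) := hC3.continuousOn
  -- log-concavity consequence
  have hlc : ∀ a b h : ℝ, T₀ ≤ a → a ≤ b → 0 ≤ h →
      deriv f (b + h) * deriv f a ≤ deriv f (a + h) * deriv f b := by
    intro a b h ha hab hh
    set L : ℝ → ℝ := fun t => Real.log (deriv f t) with hL
    have key : L (b + h) + L a ≤ L (a + h) + L b := by
      rcases eq_or_lt_of_le hh with rfl | hh'
      · simp only [add_zero]; linarith
      rcases eq_or_lt_of_le hab with rfl | hab'
      · ring_nf; exact le_refl _
      have hd : 0 < b + h - a := by linarith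
      set lam : ℝ := (b - a) / (b + h - a) with hlam
      have hlam0 : 0 ≤ lam := div_nonneg (by linarith) (le_of_lt hd)
      have hlam1 : lam ≤ 1 := by
        rw [div_le_one hd]; linarith
      have hmem1 : a ∈ Ici T₀ := ha
      have hmem2 : b + h ∈ Ici T₀ := by simp only [mem_Ici]; linarith
      -- a + h = (1 - lam) • a + lam • (b + h)... compute
      have e1 : (1 - lam) * a + lam * (b + h) = b := by
        rw [hlam]; field_simp [hd.ne']; ring
      have e2 : lam * a + (1 - lam) * (b + h) = a + h := by
        rw [hlam]; field_simp [hd.ne']; ring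
      have c1 := hlogconc.2 hmem1 hmem2 (by linarith : (0:ℝ) ≤ 1 - lam) hlam0 (by ring)
      have c2 := hlogconc.2 hmem1 hmem2 hlam0 (by linarith : (0:ℝ) ≤ 1 - lam) (by ring)
      simp only [smul_eq_mul] at c1 c2
      rw [e1] at c1
      rw [e2] at c2
      linarith
    have p1 : 0 < deriv f (b + h) := hderiv_pos _ (by simp only [ge_iff_le]; linarith)
    have p2 : 0 < deriv f a := hderiv_pos _ ha
    have p3 : 0 < deriv f (a + h) := hderiv_pos _ (by simp only [ge_iff_le]; linarith)
    have p4 : 0 < deriv f b := hderiv_pos _ (le_trans ha hab)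
    have := Real.exp_le_exp.mpr key
    rwa [Real.exp_add, Real.exp_add, hL, Real.exp_log p1, Real.exp_log p2,
      Real.exp_log p3, Real.exp_log p4] at this
  -- tangent line inequality
  have tangent : ∀ g : ℝ, T₀ ≤ g → ∀ h : ℝ, 0 ≤ h → ∀ t : ℝ, T₀ ≤ t →
      f (t + h) - (deriv f (g + h) / deriv f g) * f t ≤
        f (g + h) - (deriv f (g + h) / deriv f g) * f g := by
    intro g hg h hh t ht
    set lam : ℝ := deriv f (g + h) / deriv f g with hlamdef
    set D : ℝ → ℝ := fun t => f (t + h) - lam * f t with hD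
    have hDg : 0 < deriv f g := hderiv_pos _ hg
    have hDderiv : ∀ s, T₀ < s → HasDerivAt D (deriv f (s + h) - lam * deriv f s) s := by
      intro s hs
      have h1 : HasDerivAt (fun t => f (t + h)) (deriv f (s + h)) s := by
        have := (hdiff (s + h) (by linarith)).comp s ((hasDerivAt_id s).add_const h)
        rw [mul_one] at this; exact this
      exact h1.sub ((hdiff s hs).const_mul lam)
    have hDcont : ContinuousOn D (Ici T₀) := by
      apply ContinuousOn.sub
      · exact hcont.comp (continuous_id.add continuous_const).continuousOn
          (fun z hz => by simp only [mem_Ici] at *; linarith)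
      · exact (hcont.const_smul lam)
    rcases le_total t g with htg | htg
    · -- monotone on [T₀, g]
      have hmonD : MonotoneOn D (Icc T₀ g) := by
        apply monotoneOn_of_deriv_nonneg (convex_Icc _ _)
          (hDcont.mono Icc_subset_Ici_self)
        · intro s hs
          rw [interior_Icc] at hs
          exact ((hDderiv s hs.1).differentiableAt).differentiableWithinAt
        · intro s hs
          rw [interior_Icc] at hs
          rw [(hDderiv s hs.1).deriv]
          have := hlc s g h (le_of_lt hs.1) (le_of_lt hs.2) hh
          have hps : 0 < deriv f s := hderiv_pos _ (le_of_lt hs.1)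
          rw [hlamdef, div_mul_eq_mul_div, sub_nonneg, div_le_iff₀ hDg]
          linarith [this]
      exact hmonD ⟨ht, htg⟩ ⟨hg, le_refl g⟩ htg
    · -- antitone on [g, t]
      have hantD : AntitoneOn D (Icc g t) := by
        apply antitoneOn_of_deriv_nonpos (convex_Icc _ _)
          (hDcont.mono (Icc_subset_Ici_self.trans (Ici_subset_Ici.mpr hg)))
        · intro s hs
          rw [interior_Icc] at hs
          exact ((hDderiv s (lt_of_le_of_lt hg hs.1)).differentiableAt).differentiableWithinAt
        · intro s hs
          rw [interior_Icc] at hs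
          have hsT : T₀ < s := lt_of_le_of_lt hg hs.1
          rw [(hDderiv s hsT).deriv]
          have := hlc g s h hg (le_of_lt hs.1) hh
          have hps : 0 < deriv f s := hderiv_pos _ (le_of_lt hsT)
          rw [hlamdef, div_mul_eq_mul_div, sub_nonpos, le_div_iff₀ hDg]
          linarith [this]
      exact hantD ⟨le_refl g, htg⟩ ⟨htg, le_refl t⟩ htg
  -- Lipschitz-type bound
  have lip : ∀ x : ℝ, T₀ ≤ x → ∀ h : ℝ, 0 ≤ h → G (x + h) ≤ G x + h := by
    intro x hx h hh
    have hxh : T₀ ≤ x + h := by linarith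
    set I := ∫ y, f (x + |y|) ∂μ with hI
    set I' := ∫ y, f (x + h + |y|) ∂μ with hI'
    obtain ⟨hfg, hgT⟩ := hinv_right I (hrange x hx)
    obtain ⟨hfg', hgT'⟩ := hinv_right I' (hrange (x + h) hxh)
    rw [mem_Ici] at hgT hgT'
    set g : ℝ := finv I with hgdef
    set lam : ℝ := deriv f (g + h) / deriv f g with hlamdef
    have hlam0 : 0 ≤ lam := by
      have := hderiv_pos _ hgT
      have := hderiv_pos (g + h) (by linarith)
      positivity
    have hpt : ∀ y : ℝ, f (x + h + |y|) ≤ (f (g + h) - lam * f g) + lam * f (x + |y|) := by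
      intro y
      have hty : T₀ ≤ x + |y| := le_trans hx (by simp [abs_nonneg])
      have := tangent g hgT h hh (x + |y|) hty
      rw [← hlamdef] at this
      have harg : x + |y| + h = x + h + |y| := by ring
      rw [harg] at this
      linarith
    have hintR : Integrable (fun y => (f (g + h) - lam * f g) + lam * f (x + |y|)) μ :=
      (integrable_const _).add ((hint x hx).const_mul lam)
    have hIle : I' ≤ (f (g + h) - lam * f g) + lam * I := by
      have := integral_mono (hint (x + h) hxh) hintR (fun y => hpt y)
      rw [hI', hI]
      rw [integral_add (integrable_const _) ((hint x hx).const_mul lam),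
        integral_const, integral_const_mul] at this
      simpa [measure_univ] using this
    have hfGle : f (G (x + h)) ≤ f (g + h) := by
      rw [hGdef (x + h) hxh, hfg']
      calc I' ≤ (f (g + h) - lam * f g) + lam * I := hIle
        _ = f (g + h) := by rw [← hfg]; ring
    have hGxh : G (x + h) ∈ Ici T₀ := by rw [hGdef (x + h) hxh]; exact hgT'
    have hgh : g + h ∈ Ici T₀ := by simp only [mem_Ici]; linarith
    have := (hmono.le_iff_le hGxh hgh).mp hfGle
    rw [hGdef x hx]
    exact this
  -- conclude
  intro x hx
  by_cases hGd : DifferentiableAt ℝ G x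
  · have hG' : HasDerivAt G (deriv G x) x := hGd.hasDerivAt
    have hT : Tendsto (slope G x) (𝓝[>] x) (𝓝 (deriv G x)) := by
      refine (hasDerivAt_iff_tendsto_slope.mp hG').mono_left ?_
      exact nhdsWithin_mono x (fun z hz => ne_of_gt hz)
    refine le_of_tendsto hT ?_
    filter_upwards [self_mem_nhdsWithin] with z hz
    rw [mem_Ioi] at hz
    have hzx : 0 < z - x := by linarith
    have := lip x hx (z - x) (le_of_lt hzx)
    rw [show x + (z - x) = z by ring] at this
    rw [slope_def_field, div_le_one hzx]
    linarith
  · rw [deriv_zero_of_not_differentiableAt hGd]; norm_num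
end

section
/- Let g ∈ L²([a,b]) be continuously differentiable on [a,b] with g(a) = g(b) = 0 (or more weakly, let g vanish at at least one point of [a,b]). If g vanishes at both endpoints a and b, then ∫_a^b |g(ξ)|² dξ ≤ ((b−a)/π)² ∫_a^b |g'(ξ)|² dξ. -/
open MeasureTheory intervalIntegral Set Filter Topology

private lemma pw_tendsto_div_sin : Tendsto (fun t : ℝ => t / Real.sin t) (𝓝[≠] (0:ℝ)) (𝓝 1) := by
  have h := (Real.hasDerivAt_sin 0)
  rw [hasDerivAt_iff_tendsto_slope] at h
  have h2 : Tendsto (fun t : ℝ => Real.sin t / t) (𝓝[≠] (0:ℝ)) (𝓝 1) := by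
    rw [Real.cos_zero] at h
    exact h.congr (fun t => by rw [slope_def_field, Real.sin_zero, sub_zero, sub_zero])
  have h3 := h2.inv₀ one_ne_zero
  simpa [inv_div] using h3

private lemma pw_key (a b : ℝ) (hab : a < b) (g f : ℝ → ℝ)
    (hgc : ContinuousOn g (Icc a b)) (hfc : ContinuousOn f (Icc a b))
    (hderiv : ∀ x ∈ Ioo a b, HasDerivAt g (f x) x)
    (K : ℝ)
    (hlipa : ∀ x ∈ Icc a b, |g x| ≤ K * (x - a))
    (hlipb : ∀ x ∈ Icc a b, |g x| ≤ K * (b - x)) :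
    (Real.pi / (b - a)) ^ 2 * ∫ x in a..b, g x ^ 2 ≤ ∫ x in a..b, f x ^ 2 := by
  have hπ : (0:ℝ) < Real.pi := Real.pi_pos
  have hL : (0:ℝ) < b - a := sub_pos.2 hab
  set L := b - a with hLdef
  set k := Real.pi / L with hkdef
  have hk0 : 0 < k := div_pos hπ hL
  have hkL : k * L = Real.pi := div_mul_cancel₀ _ hL.ne'
  set c : ℝ → ℝ := fun x => k * Real.cos (k * (x - a)) / Real.sin (k * (x - a)) with hcdef
  set F : ℝ → ℝ := fun x => c x * g x ^ 2 with hFdef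
  have hK0 : 0 ≤ K := by
    have h1 := hlipa b (right_mem_Icc.2 hab.le)
    nlinarith [abs_nonneg (g b)]
  -- positivity of sin on the open interval
  have hsin : ∀ x ∈ Ioo a b, 0 < Real.sin (k * (x - a)) := by
    intro x hx
    apply Real.sin_pos_of_pos_of_lt_pi
    · exact mul_pos hk0 (sub_pos.2 hx.1)
    · rw [← hkL]
      exact mul_lt_mul_of_pos_left (by simp [hLdef]; linarith [hx.2]) hk0
  -- derivative of c
  have hc : ∀ x ∈ Ioo a b, HasDerivAt c (-(c x ^ 2 + k ^ 2)) x := by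
    intro x hx
    have hs := (hsin x hx).ne'
    have hθ : HasDerivAt (fun y : ℝ => k * (y - a)) k x := by
      simpa using ((hasDerivAt_id x).sub_const a).const_mul k
    have hcos : HasDerivAt (fun y : ℝ => Real.cos (k * (y - a)))
        (-Real.sin (k * (x - a)) * k) x := (Real.hasDerivAt_cos _).comp x hθ
    have hsin' : HasDerivAt (fun y : ℝ => Real.sin (k * (y - a)))
        (Real.cos (k * (x - a)) * k) x := (Real.hasDerivAt_sin _).comp x hθ
    have h := (hcos.const_mul k).div hsin' hs
    refine h.congr_deriv ?_
    have h1 := Real.sin_sq_add_cos_sq (k * (x - a))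
    simp only [hcdef]
    field_simp
    nlinarith [h1]
  -- derivative of F
  have hF' : ∀ x ∈ Ioo a b,
      HasDerivAt F (f x ^ 2 - k ^ 2 * g x ^ 2 - (f x - c x * g x) ^ 2) x := by
    intro x hx
    have h1 := (hc x hx).mul ((hderiv x hx).pow 2)
    refine h1.congr_deriv ?_
    simp only [Pi.pow_apply]
    ring
  -- continuity of c on compact subintervals of the open interval
  have hccont : ∀ s : Set ℝ, s ⊆ Ioo a b → ContinuousOn c s := by
    intro s hsub
    apply ContinuousOn.div
    · fun_prop
    · fun_prop
    · exact fun x hx => (hsin x (hsub hx)).ne'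
  -- main inequality on inner intervals
  have hmain : ∀ ε ∈ Ioo (0:ℝ) (L / 2),
      k ^ 2 * ∫ x in a + ε..b - ε, g x ^ 2 ≤
        (∫ x in a + ε..b - ε, f x ^ 2) + F (a + ε) - F (b - ε) := by
    intro ε hε
    set p := a + ε with hp
    set q := b - ε with hq
    have hpq : p < q := by simp only [hp, hq]; simp only [hLdef] at hε; linarith [hε.1, hε.2]
    have hsubo : Icc p q ⊆ Ioo a b := by
      intro x hx
      constructor
      · linarith [hx.1, hε.1]
      · have : ε > 0 := hε.1
        simp only [hq] at hx
        linarith [hx.2]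
    have hsubc : Icc p q ⊆ Icc a b := hsubo.trans Ioo_subset_Icc_self
    have hgcs : ContinuousOn g (Icc p q) := hgc.mono hsubc
    have hfcs : ContinuousOn f (Icc p q) := hfc.mono hsubc
    have hcs : ContinuousOn c (Icc p q) := hccont _ hsubo
    have hg2 : IntervalIntegrable (fun x => g x ^ 2) volume p q := by
      apply ContinuousOn.intervalIntegrable
      rw [uIcc_of_le hpq.le]; exact hgcs.pow 2
    have hf2 : IntervalIntegrable (fun x => f x ^ 2) volume p q := by
      apply ContinuousOn.intervalIntegrable
      rw [uIcc_of_le hpq.le]; exact hfcs.pow 2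
    have hsq : IntervalIntegrable (fun x => (f x - c x * g x) ^ 2) volume p q := by
      apply ContinuousOn.intervalIntegrable
      rw [uIcc_of_le hpq.le]; exact ((hfcs.sub (hcs.mul hgcs)).pow 2)
    have hFTC : (∫ x in p..q, (f x ^ 2 - k ^ 2 * g x ^ 2 - (f x - c x * g x) ^ 2))
        = F q - F p := by
      apply intervalIntegral.integral_eq_sub_of_hasDerivAt
      · intro x hx
        rw [uIcc_of_le hpq.le] at hx
        exact hF' x (hsubo hx)
      · apply ContinuousOn.intervalIntegrable
        rw [uIcc_of_le hpq.le]
        exact ((hfcs.pow 2).sub ((continuousOn_const.mul (hgcs.pow 2)))).sub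
          ((hfcs.sub (hcs.mul hgcs)).pow 2)
    have hsplit : (∫ x in p..q, (f x ^ 2 - k ^ 2 * g x ^ 2 - (f x - c x * g x) ^ 2))
        = (∫ x in p..q, f x ^ 2) - k ^ 2 * (∫ x in p..q, g x ^ 2)
          - ∫ x in p..q, (f x - c x * g x) ^ 2 := by
      rw [intervalIntegral.integral_sub ((hf2.sub (hg2.const_mul (k ^ 2)))) hsq,
        intervalIntegral.integral_sub hf2 (hg2.const_mul (k ^ 2)),
        intervalIntegral.integral_const_mul]
    have hpos : 0 ≤ ∫ x in p..q, (f x - c x * g x) ^ 2 :=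
      intervalIntegral.integral_nonneg hpq.le (fun x _ => sq_nonneg _)
    have := hFTC
    rw [hsplit] at this
    linarith
  -- limits of the integrals
  have hT : ∀ h : ℝ → ℝ, ContinuousOn h (Icc a b) →
      Tendsto (fun ε : ℝ => ∫ x in a + ε..b - ε, h x) (𝓝[>] (0:ℝ))
        (𝓝 (∫ x in a..b, h x)) := by
    intro h hh
    have hint : IntegrableOn h (uIcc a b) volume := by
      rw [uIcc_of_le hab.le]; exact hh.integrableOn_Icc
    have hintI : IntervalIntegrable h volume a b := by
      apply ContinuousOn.intervalIntegrable
      rw [uIcc_of_le hab.le]; exact hh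
    have hprim : ContinuousOn (fun u => ∫ x in a..u, h x) (uIcc a b) :=
      intervalIntegral.continuousOn_primitive_interval hint
    have hta : Tendsto (fun ε : ℝ => a + ε) (𝓝[>] (0:ℝ)) (𝓝[uIcc a b] a) := by
      rw [tendsto_nhdsWithin_iff]
      refine ⟨?_, ?_⟩
      · have h2 : Tendsto (fun ε : ℝ => a + ε) (𝓝 (0:ℝ)) (𝓝 (a + 0)) :=
          tendsto_const_nhds.add tendsto_id
        rw [add_zero] at h2
        exact h2.mono_left nhdsWithin_le_nhds
      · filter_upwards [Ioo_mem_nhdsGT_of_mem (Set.left_mem_Ico.2 hL)] with ε hε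
        rw [uIcc_of_le hab.le]
        exact ⟨by linarith [hε.1], by simp only [hLdef] at hε; linarith [hε.2]⟩
    have htb : Tendsto (fun ε : ℝ => b - ε) (𝓝[>] (0:ℝ)) (𝓝[uIcc a b] b) := by
      rw [tendsto_nhdsWithin_iff]
      refine ⟨?_, ?_⟩
      · have h2 : Tendsto (fun ε : ℝ => b - ε) (𝓝 (0:ℝ)) (𝓝 (b - 0)) :=
          tendsto_const_nhds.sub tendsto_id
        rw [sub_zero] at h2
        exact h2.mono_left nhdsWithin_le_nhds
      · filter_upwards [Ioo_mem_nhdsGT_of_mem (Set.left_mem_Ico.2 hL)] with ε hε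
        rw [uIcc_of_le hab.le]
        exact ⟨by simp only [hLdef] at hε; linarith [hε.2], by linarith [hε.1]⟩
    have Ta : Tendsto (fun ε : ℝ => ∫ x in a..a + ε, h x) (𝓝[>] (0:ℝ))
        (𝓝 (∫ x in a..a, h x)) :=
      ((hprim.continuousWithinAt (by rw [uIcc_of_le hab.le]; exact left_mem_Icc.2 hab.le)).tendsto).comp hta
    have Tb : Tendsto (fun ε : ℝ => ∫ x in a..b - ε, h x) (𝓝[>] (0:ℝ))
        (𝓝 (∫ x in a..b, h x)) :=
      ((hprim.continuousWithinAt (by rw [uIcc_of_le hab.le]; exact right_mem_Icc.2 hab.le)).tendsto).comp htb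
    have Tsub := Tb.sub Ta
    rw [intervalIntegral.integral_same, sub_zero] at Tsub
    apply Tsub.congr'
    filter_upwards [Ioo_mem_nhdsGT_of_mem (Set.left_mem_Ico.2 (half_pos hL))] with ε hε
    have h1 : IntervalIntegrable h volume a (b - ε) := by
      apply hintI.mono_set
      rw [uIcc_of_le hab.le, uIcc_of_le (by simp only [hLdef] at hε; linarith [hε.1, hε.2] : a ≤ b - ε)]
      exact Icc_subset_Icc le_rfl (by linarith [hε.1])
    have h2 : IntervalIntegrable h volume a (a + ε) := by
      apply hintI.mono_set
      rw [uIcc_of_le hab.le, uIcc_of_le (by linarith [hε.1] : a ≤ a + ε)]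
      exact Icc_subset_Icc le_rfl (by simp only [hLdef] at hε; linarith [hε.2])
    exact intervalIntegral.integral_interval_sub_left h1 h2
  -- boundary terms tend to zero
  have hkε : Tendsto (fun ε : ℝ => k * ε) (𝓝[>] (0:ℝ)) (𝓝[≠] (0:ℝ)) := by
    rw [tendsto_nhdsWithin_iff]
    refine ⟨?_, ?_⟩
    · have h2 : Tendsto (fun ε : ℝ => k * ε) (𝓝 (0:ℝ)) (𝓝 (k * 0)) :=
        tendsto_const_nhds.mul tendsto_id
      rw [mul_zero] at h2
      exact h2.mono_left nhdsWithin_le_nhds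
    · filter_upwards [self_mem_nhdsWithin] with ε hε
      exact (mul_pos hk0 hε).ne'
  have hratio : Tendsto (fun ε : ℝ => (k * ε) / Real.sin (k * ε)) (𝓝[>] (0:ℝ)) (𝓝 1) :=
    pw_tendsto_div_sin.comp hkε
  have hU : Tendsto (fun ε : ℝ => K ^ 2 * ((k * ε) / Real.sin (k * ε)) * ε) (𝓝[>] (0:ℝ)) (𝓝 0) := by
    have h2 : Tendsto (fun ε : ℝ => K ^ 2 * ((k * ε) / Real.sin (k * ε)) * ε) (𝓝[>] (0:ℝ))
        (𝓝 (K ^ 2 * 1 * 0)) :=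
      (tendsto_const_nhds.mul hratio).mul (tendsto_id.mono_right nhdsWithin_le_nhds)
    simpa using h2
  -- facts valid for small positive ε
  have hev : ∀ ε ∈ Ioo (0:ℝ) (L / 2),
      (0 < Real.sin (k * ε) ∧ 0 ≤ Real.cos (k * ε)) ∧
        g (a + ε) ^ 2 ≤ (K * ε) ^ 2 ∧ g (b - ε) ^ 2 ≤ (K * ε) ^ 2 := by
    intro ε hε
    have hs1 : 0 < k * ε := mul_pos hk0 hε.1
    have hs2 : k * ε < Real.pi / 2 := by
      have := mul_lt_mul_of_pos_left hε.2 hk0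
      calc k * ε < k * (L / 2) := this
        _ = Real.pi / 2 := by rw [mul_div_assoc'] at *; rw [hkL]  -- fix
    have hsinp : 0 < Real.sin (k * ε) :=
      Real.sin_pos_of_pos_of_lt_pi hs1 (lt_trans hs2 (by linarith))
    have hcosp : 0 ≤ Real.cos (k * ε) :=
      Real.cos_nonneg_of_mem_Icc ⟨by linarith, hs2.le⟩
    have hmema : a + ε ∈ Icc a b := ⟨by linarith [hε.1], by simp only [hLdef] at hε; linarith [hε.2]⟩
    have hmemb : b - ε ∈ Icc a b := ⟨by simp only [hLdef] at hε; linarith [hε.2], by linarith [hε.1]⟩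
    have hga : |g (a + ε)| ≤ K * ε := by
      have := hlipa (a + ε) hmema
      simpa using this
    have hgb : |g (b - ε)| ≤ K * ε := by
      have := hlipb (b - ε) hmemb
      simpa using this
    refine ⟨⟨hsinp, hcosp⟩, ?_, ?_⟩
    · nlinarith [sq_abs (g (a + ε)), abs_nonneg (g (a + ε))]
    · nlinarith [sq_abs (g (b - ε)), abs_nonneg (g (b - ε))]
  have hmemIoo : Ioo (0:ℝ) (L / 2) ∈ (𝓝[>] (0:ℝ)) :=
    Ioo_mem_nhdsGT_of_mem (Set.left_mem_Ico.2 (half_pos hL))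
  have hFa : ∀ ε ∈ Ioo (0:ℝ) (L / 2),
      F (a + ε) = k * Real.cos (k * ε) / Real.sin (k * ε) * g (a + ε) ^ 2 := by
    intro ε hε
    simp only [hFdef, hcdef]
    rw [show a + ε - a = ε by ring]
  have hFb : ∀ ε ∈ Ioo (0:ℝ) (L / 2),
      F (b - ε) = -(k * Real.cos (k * ε) / Real.sin (k * ε)) * g (b - ε) ^ 2 := by
    intro ε hε
    simp only [hFdef, hcdef]
    rw [show k * (b - ε - a) = Real.pi - k * ε by
      rw [show b - ε - a = (b - a) - ε by ring, ← hLdef, mul_sub, hkL]]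
    rw [Real.cos_pi_sub, Real.sin_pi_sub]
    ring
  have T3 : Tendsto (fun ε : ℝ => F (a + ε)) (𝓝[>] (0:ℝ)) (𝓝 0) := by
    apply squeeze_zero' _ _ hU
    · filter_upwards [hmemIoo] with ε hε
      obtain ⟨⟨hsinp, hcosp⟩, hg2, -⟩ := hev ε hε
      rw [hFa ε hε]
      exact mul_nonneg (div_nonneg (mul_nonneg hk0.le hcosp) hsinp.le) (sq_nonneg _)
    · filter_upwards [hmemIoo] with ε hε
      obtain ⟨⟨hsinp, hcosp⟩, hg2, -⟩ := hev ε hε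
      rw [hFa ε hε]
      rw [show k * Real.cos (k * ε) / Real.sin (k * ε) * g (a + ε) ^ 2
          = (k * Real.cos (k * ε) * g (a + ε) ^ 2) / Real.sin (k * ε) by ring,
        show K ^ 2 * ((k * ε) / Real.sin (k * ε)) * ε
          = (K ^ 2 * (k * ε) * ε) / Real.sin (k * ε) by ring]
      rw [div_le_div_iff_of_pos_right hsinp]
      nlinarith [mul_nonneg (mul_nonneg (sub_nonneg.2 (Real.cos_le_one (k * ε))) hk0.le)
          (sq_nonneg (g (a + ε))),
        mul_le_mul_of_nonneg_left hg2 hk0.le]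
  have T4 : Tendsto (fun ε : ℝ => F (b - ε)) (𝓝[>] (0:ℝ)) (𝓝 0) := by
    have hneg : Tendsto (fun ε : ℝ => -F (b - ε)) (𝓝[>] (0:ℝ)) (𝓝 0) := by
      apply squeeze_zero' _ _ hU
      · filter_upwards [hmemIoo] with ε hε
        obtain ⟨⟨hsinp, hcosp⟩, -, hg2⟩ := hev ε hε
        rw [hFb ε hε]
        have : -(-(k * Real.cos (k * ε) / Real.sin (k * ε)) * g (b - ε) ^ 2)
            = k * Real.cos (k * ε) / Real.sin (k * ε) * g (b - ε) ^ 2 := by ring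
        rw [this]
        exact mul_nonneg (div_nonneg (mul_nonneg hk0.le hcosp) hsinp.le) (sq_nonneg _)
      · filter_upwards [hmemIoo] with ε hε
        obtain ⟨⟨hsinp, hcosp⟩, -, hg2⟩ := hev ε hε
        rw [hFb ε hε]
        have heq : -(-(k * Real.cos (k * ε) / Real.sin (k * ε)) * g (b - ε) ^ 2)
            = k * Real.cos (k * ε) / Real.sin (k * ε) * g (b - ε) ^ 2 := by ring
        rw [heq]
        rw [show k * Real.cos (k * ε) / Real.sin (k * ε) * g (b - ε) ^ 2
            = (k * Real.cos (k * ε) * g (b - ε) ^ 2) / Real.sin (k * ε) by ring,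
          show K ^ 2 * ((k * ε) / Real.sin (k * ε)) * ε
            = (K ^ 2 * (k * ε) * ε) / Real.sin (k * ε) by ring]
        rw [div_le_div_iff_of_pos_right hsinp]
        nlinarith [mul_nonneg (mul_nonneg (sub_nonneg.2 (Real.cos_le_one (k * ε))) hk0.le)
            (sq_nonneg (g (b - ε))),
          mul_le_mul_of_nonneg_left hg2 hk0.le]
    have := hneg.neg
    simpa using this
  -- pass to the limit
  have T1 : Tendsto (fun ε : ℝ => ∫ x in a + ε..b - ε, g x ^ 2) (𝓝[>] (0:ℝ))
      (𝓝 (∫ x in a..b, g x ^ 2)) := hT (fun x => g x ^ 2) (hgc.pow 2)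
  have T2 : Tendsto (fun ε : ℝ => ∫ x in a + ε..b - ε, f x ^ 2) (𝓝[>] (0:ℝ))
      (𝓝 (∫ x in a..b, f x ^ 2)) := hT (fun x => f x ^ 2) (hfc.pow 2)
  have hLt : Tendsto (fun ε : ℝ => k ^ 2 * ∫ x in a + ε..b - ε, g x ^ 2) (𝓝[>] (0:ℝ))
      (𝓝 (k ^ 2 * ∫ x in a..b, g x ^ 2)) := T1.const_mul _
  have hRt : Tendsto (fun ε : ℝ => (∫ x in a + ε..b - ε, f x ^ 2) + F (a + ε) - F (b - ε))
      (𝓝[>] (0:ℝ)) (𝓝 ((∫ x in a..b, f x ^ 2) + 0 - 0)) := (T2.add T3).sub T4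
  have hle := le_of_tendsto_of_tendsto hLt hRt ?_
  · simpa using hle
  · filter_upwards [hmemIoo] with ε hε
    exact hmain ε hε

theorem poincare_wirtinger
    (a b : ℝ) (hab : a < b) (g : ℝ → ℝ)
    (hC1 : ContDiffOn ℝ 1 g (Icc a b))
    (ha : g a = 0) (hb : g b = 0) :
    ∫ ξ in a..b, (g ξ) ^ 2 ≤ ((b - a) / Real.pi) ^ 2 * ∫ ξ in a..b, (deriv g ξ) ^ 2 := by
  have hπ : (0:ℝ) < Real.pi := Real.pi_pos
  have hL : (0:ℝ) < b - a := sub_pos.2 hab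
  set f : ℝ → ℝ := fun x => derivWithin g (Icc a b) x with hfdef
  have hgc : ContinuousOn g (Icc a b) := hC1.continuousOn
  have hfc : ContinuousOn f (Icc a b) :=
    hC1.continuousOn_derivWithin (uniqueDiffOn_Icc hab) le_rfl
  have hdiff : DifferentiableOn ℝ g (Icc a b) := hC1.differentiableOn one_ne_zero
  have hderiv : ∀ x ∈ Ioo a b, HasDerivAt g (f x) x := by
    intro x hx
    have h1 := (hdiff x (Ioo_subset_Icc_self hx)).hasDerivWithinAt
    exact h1.hasDerivAt (Icc_mem_nhds hx.1 hx.2)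
  -- Lipschitz constant
  obtain ⟨C, hC⟩ := isCompact_Icc.exists_bound_of_continuousOn hfc
  have hKlip : LipschitzOnWith C.toNNReal g (Icc a b) := by
    apply (convex_Icc a b).lipschitzOnWith_of_nnnorm_derivWithin_le hdiff
    intro x hx
    rw [← NNReal.coe_le_coe, coe_nnnorm, Real.coe_toNNReal']
    exact le_trans (hC x hx) (le_max_left _ _)
  have hlipa : ∀ x ∈ Icc a b, |g x| ≤ (C.toNNReal : ℝ) * (x - a) := by
    intro x hx
    have := hKlip.dist_le_mul x hx a (left_mem_Icc.2 hab.le)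
    have hxa : |x - a| = x - a := abs_of_nonneg (by linarith [hx.1])
    rw [Real.dist_eq, Real.dist_eq, ha, sub_zero, hxa] at this
    exact this
  have hlipb : ∀ x ∈ Icc a b, |g x| ≤ (C.toNNReal : ℝ) * (b - x) := by
    intro x hx
    have := hKlip.dist_le_mul x hx b (right_mem_Icc.2 hab.le)
    have hxb : |x - b| = b - x := by rw [abs_sub_comm]; exact abs_of_nonneg (by linarith [hx.2])
    rw [Real.dist_eq, Real.dist_eq, hb, sub_zero, hxb] at this
    exact this
  have hkey := pw_key a b hab g f hgc hfc hderiv _ hlipa hlipb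
  -- replace deriv by f in the integral
  have hcongr : (∫ ξ in a..b, (deriv g ξ) ^ 2) = ∫ x in a..b, f x ^ 2 := by
    apply intervalIntegral.integral_congr_ae
    have hb' : ∀ᵐ x : ℝ, x ≠ b := by
      have : (volume : Measure ℝ) {b} = 0 := measure_singleton b
      rw [ae_iff]
      simpa using this
    filter_upwards [hb'] with x hx hxI
    rw [Set.uIoc_of_le hab.le] at hxI
    have hxo : x ∈ Ioo a b := ⟨hxI.1, lt_of_le_of_ne hxI.2 hx⟩
    rw [(hderiv x hxo).deriv]
  rw [hcongr]
  have hk2 : ((b - a) / Real.pi) ^ 2 * ((Real.pi / (b - a)) ^ 2 * ∫ x in a..b, g x ^ 2)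
      = ∫ x in a..b, g x ^ 2 := by
    field_simp
  calc (∫ ξ in a..b, (g ξ) ^ 2)
      = ((b - a) / Real.pi) ^ 2 * ((Real.pi / (b - a)) ^ 2 * ∫ x in a..b, g x ^ 2) := hk2.symm
    _ ≤ ((b - a) / Real.pi) ^ 2 * ∫ x in a..b, f x ^ 2 := by
        apply mul_le_mul_of_nonneg_left hkey (by positivity)
end

section
/- Let S(t) = 2π·e^{4π t^s} with 0 < s < 1, so S⁻¹(t) = ((1/(4π))·log(t/(2π)))^{1/s} for t ≥ 2π. Define, for large j, λ̃_j = ((log j)/(4π) − ((1−s)/(4πs))·log((log j)/(4π)) + (log s)/(4π))^{1/s} − d̃ and μ̃_j = (j/2)·(4π/log j)^{1/s} − d for constants d, d̃ ≥ 0. Then λ̃_j ~ ((log j)/(4π))^{1/s} and μ̃_j ~ (j/2)·(4π/log j)^{1/s} as j → ∞, and for sufficiently large j, S(λ̃_j + d̃)·(λ̃_{j+1} − λ̃_j) ≤ 1/2 and S⁻¹(μ̃_j + d)·(μ̃_{j+1} − μ̃_j) ≤ 1/2. -/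
open Real Filter

lemma aux_rpow_sub_le {a b p : ℝ} (ha : 0 ≤ a) (hab : a ≤ b) (hp : 1 ≤ p) :
    b ^ p - a ^ p ≤ p * b ^ (p - 1) * (b - a) := by
  have hp0 : (0:ℝ) ≤ p := zero_le_one.trans hp
  have key := norm_image_sub_le_of_norm_deriv_le_segment'
    (f := fun x : ℝ => x ^ p) (f' := fun x : ℝ => p * x ^ (p - 1))
    (a := a) (b := b) (C := p * b ^ (p - 1))
    (fun x _ => (Real.hasDerivAt_rpow_const (Or.inr hp)).hasDerivWithinAt)
    (fun x hx => by
      have hx0 : 0 ≤ x := ha.trans hx.1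
      rw [Real.norm_eq_abs, abs_mul, abs_of_nonneg hp0,
        abs_of_nonneg (Real.rpow_nonneg hx0 _)]
      exact mul_le_mul_of_nonneg_left
        (Real.rpow_le_rpow hx0 hx.2.le (by linarith)) hp0)
    b (Set.right_mem_Icc.2 hab)
  calc b ^ p - a ^ p ≤ |b ^ p - a ^ p| := le_abs_self _
    _ ≤ p * b ^ (p - 1) * (b - a) := by simpa [Real.norm_eq_abs] using key

lemma aux_sub_log (K : ℝ) : Tendsto (fun y : ℝ => y - K * Real.log y) atTop atTop := by
  have h := Real.isLittleO_log_id_atTop.def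
    (show (0:ℝ) < (2 * (|K| + 1))⁻¹ by positivity)
  refine tendsto_atTop_mono' atTop (f₁ := fun y : ℝ => y / 2) ?_
    (tendsto_id.atTop_div_const two_pos)
  filter_upwards [h, eventually_ge_atTop (0:ℝ)] with y hy hy0
  simp only [Real.norm_eq_abs, id_eq] at hy
  rw [abs_of_nonneg hy0] at hy
  have h1 : K * Real.log y ≤ |K| * |Real.log y| := by
    calc K * Real.log y ≤ |K * Real.log y| := le_abs_self _
      _ = |K| * |Real.log y| := abs_mul _ _
  have h2 : |K| * |Real.log y| ≤ |K| * ((2 * (|K| + 1))⁻¹ * y) :=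
    mul_le_mul_of_nonneg_left hy (abs_nonneg K)
  have h3 : |K| * ((2 * (|K| + 1))⁻¹ * y) ≤ y / 2 := by
    have ht : (2 * (|K| + 1))⁻¹ * |K| ≤ 1 / 2 := by
      rw [inv_mul_le_iff₀ (by positivity)]
      nlinarith [abs_nonneg K]
    calc |K| * ((2 * (|K| + 1))⁻¹ * y) = ((2 * (|K| + 1))⁻¹ * |K|) * y := by ring
      _ ≤ 1 / 2 * y := mul_le_mul_of_nonneg_right ht hy0
      _ = y / 2 := by ring
  linarith

set_option maxHeartbeats 1000000 in
theorem asymmetric_sequences_properties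
    (s : ℝ) (hs0 : 0 < s) (hs1 : s < 1) (d dt : ℝ) (hd : 0 ≤ d) (hdt : 0 ≤ dt)
    (S Sinv lam mu : ℝ → ℝ)
    (hS : ∀ t, S t = 2 * π * Real.exp (4 * π * t ^ s))
    (hSinv : ∀ t, Sinv t = (1 / (4 * π) * Real.log (t / (2 * π))) ^ (1 / s))
    (hlam : ∀ j : ℝ, lam j =
      (Real.log j / (4 * π) - (1 - s) / (4 * π * s) * Real.log (Real.log j / (4 * π)) +
        Real.log s / (4 * π)) ^ (1 / s) - dt)
    (hmu : ∀ j : ℝ, mu j = j / 2 * (4 * π / Real.log j) ^ (1 / s) - d) :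
    Tendsto (fun j : ℕ => lam j / ((Real.log j / (4 * π)) ^ (1 / s))) atTop (nhds 1) ∧
    Tendsto (fun j : ℕ => mu j / ((j : ℝ) / 2 * (4 * π / Real.log j) ^ (1 / s)))
      atTop (nhds 1) ∧
    ∃ J : ℕ, ∀ j : ℕ, J ≤ j →
      S (lam j + dt) * (lam (j + 1) - lam j) ≤ 1 / 2 ∧
      Sinv (mu j + d) * (mu (j + 1) - mu j) ≤ 1 / 2 := by
  have hπ : (0:ℝ) < π := Real.pi_pos
  have h4π : (0:ℝ) < 4 * π := by linarith
  have h4π1 : (1:ℝ) ≤ 4 * π := by nlinarith [Real.pi_gt_three]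
  set p := 1 / s with hp_def
  have hp0 : 0 < p := by positivity
  have hp1 : 1 ≤ p := by rw [hp_def, le_div_iff₀ hs0]; linarith
  have hps : p * s = 1 := one_div_mul_cancel hs0.ne'
  set c := (1 - s) / (4 * π * s) with hc_def
  have hc0 : 0 < c := by
    apply div_pos (by linarith) (by positivity)
  set q := (1 - s) / s with hq_def
  have hq0 : 0 ≤ q := le_of_lt (div_pos (by linarith) hs0)
  have hq : q = p - 1 := by rw [hq_def, hp_def]; field_simp
  have hcq : 4 * π * c = q := by rw [hc_def, hq_def]; field_simp
  set L : ℝ → ℝ := fun x => Real.log x / (4 * π) with hL_def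
  set A : ℝ → ℝ := fun x => L x - c * Real.log (L x) + Real.log s / (4 * π) with hA_def
  have hlamA : ∀ y : ℝ, lam y = A y ^ p - dt := by
    intro y; rw [hlam y]
  have hmuA : ∀ y : ℝ, mu y + d = y / 2 * (4 * π / Real.log y) ^ p := by
    intro y; rw [hmu y]; ring
  -- basic tendsto facts
  have hlogN : Tendsto (fun j : ℕ => Real.log j) atTop atTop :=
    Real.tendsto_log_atTop.comp tendsto_natCast_atTop_atTop
  have hLN : Tendsto (fun j : ℕ => L j) atTop atTop := hlogN.atTop_div_const h4π
  have hLN' : Tendsto (fun j : ℕ => L ((j:ℝ) + 1)) atTop atTop :=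
    (Real.tendsto_log_atTop.comp
      (tendsto_atTop_add_const_right _ 1 tendsto_natCast_atTop_atTop)).atTop_div_const h4π
  have hloglogN' : Tendsto (fun j : ℕ => Real.log (L ((j:ℝ) + 1))) atTop atTop :=
    Real.tendsto_log_atTop.comp hLN'
  -- A j / L j → 1
  have hALdiv : Tendsto (fun j : ℕ => A (j:ℝ) / L (j:ℝ)) atTop (nhds 1) := by
    have h0 : Tendsto (fun j : ℕ => Real.log (L (j:ℝ)) / L (j:ℝ)) atTop (nhds 0) :=
      (Real.isLittleO_log_id_atTop.tendsto_div_nhds_zero).comp hLN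
    have h0' : Tendsto (fun j : ℕ => (L (j:ℝ))⁻¹) atTop (nhds 0) := hLN.inv_tendsto_atTop
    have hcomb := ((tendsto_const_nhds (x := (1:ℝ)) (f := atTop)).sub
      (h0.const_mul c)).add (h0'.const_mul (Real.log s / (4 * π)))
    refine Tendsto.congr' ?_ (by simpa using hcomb)
    filter_upwards [hLN.eventually_gt_atTop 0] with j hLj
    rw [hA_def]
    field_simp
  have hA_ev : ∀ᶠ j : ℕ in atTop, 0 ≤ A (j:ℝ) := by
    filter_upwards [hALdiv.eventually (eventually_gt_nhds (show (1:ℝ)/2 < 1 by norm_num)),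
      hLN.eventually_gt_atTop 0] with j h1 h2
    have : A (j:ℝ) = A (j:ℝ) / L (j:ℝ) * L (j:ℝ) := (div_mul_cancel₀ _ h2.ne').symm
    rw [this]
    exact mul_nonneg (by linarith) h2.le
  refine ⟨?_, ?_, ?_⟩
  · -- Part 1
    show Tendsto (fun j : ℕ => lam j / (L (j:ℝ)) ^ p) atTop (nhds 1)
    have hA1 : Tendsto (fun j : ℕ => (A (j:ℝ) / L (j:ℝ)) ^ p) atTop (nhds 1) := by
      simpa using hALdiv.rpow_const (Or.inl one_ne_zero)
    have hLp : Tendsto (fun j : ℕ => (L (j:ℝ)) ^ p) atTop atTop :=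
      (tendsto_rpow_atTop hp0).comp hLN
    have hdt0 : Tendsto (fun j : ℕ => dt * ((L (j:ℝ)) ^ p)⁻¹) atTop (nhds 0) := by
      simpa using hLp.inv_tendsto_atTop.const_mul dt
    have hcomb := hA1.sub hdt0
    refine Tendsto.congr' ?_ (by simpa using hcomb)
    filter_upwards [hA_ev, hLN.eventually_gt_atTop 0] with j hA hL
    rw [Real.div_rpow hA hL.le, hlamA (j:ℝ)]
    rw [sub_div, div_eq_mul_inv dt]
  · -- Part 2
    show Tendsto (fun j : ℕ => mu j / ((j:ℝ) / 2 * (4 * π / Real.log j) ^ p)) atTop (nhds 1)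
    have hmu_top : Tendsto (fun j : ℕ => (j:ℝ) / 2 * (4 * π / Real.log j) ^ p)
        atTop atTop := by
      have hlo := (isLittleO_log_rpow_rpow_atTop p
        (show (0:ℝ) < 1/2 by norm_num)).def one_pos
      refine tendsto_atTop_mono' atTop ?_
        (((tendsto_rpow_atTop (show (0:ℝ) < 1/2 by norm_num)).comp
          tendsto_natCast_atTop_atTop).atTop_div_const two_pos)
      filter_upwards [tendsto_natCast_atTop_atTop.eventually hlo,
        hlogN.eventually_gt_atTop 0,
        tendsto_natCast_atTop_atTop.eventually_ge_atTop (1:ℝ)] with j hj hlog hx1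
      have hx0 : (0:ℝ) < (j:ℝ) := by linarith
      have hLx : 0 < L (j:ℝ) := by rw [hL_def]; positivity
      rw [Real.norm_eq_abs, Real.norm_eq_abs, one_mul,
        abs_of_nonneg (Real.rpow_nonneg hlog.le _),
        abs_of_nonneg (Real.rpow_nonneg hx0.le _)] at hj
      have hLp_le : L (j:ℝ) ^ p ≤ (j:ℝ) ^ ((1:ℝ)/2) := by
        refine le_trans (Real.rpow_le_rpow hLx.le ?_ hp0.le) hj
        rw [hL_def]
        exact div_le_self hlog.le h4π1
      have hLpp : 0 < L (j:ℝ) ^ p := Real.rpow_pos_of_pos hLx p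
      have hainv : (4 * π / Real.log (j:ℝ)) ^ p = (L (j:ℝ) ^ p)⁻¹ := by
        refine eq_inv_of_mul_eq_one_left ?_
        rw [← Real.mul_rpow (by positivity) (by positivity),
          show (4 * π / Real.log (j:ℝ)) * L (j:ℝ) = 1 by
            rw [hL_def]; field_simp, Real.one_rpow]
      have hxhalf : (j:ℝ) * ((j:ℝ) ^ ((1:ℝ)/2))⁻¹ = (j:ℝ) ^ ((1:ℝ)/2) := by
        rw [← Real.rpow_neg hx0.le]
        nth_rewrite 1 [← Real.rpow_one (j:ℝ)]
        rw [← Real.rpow_add hx0]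
        norm_num
      have hinvle : ((j:ℝ) ^ ((1:ℝ)/2))⁻¹ ≤ (L (j:ℝ) ^ p)⁻¹ :=
        inv_anti₀ hLpp hLp_le
      calc (j:ℝ) ^ ((1:ℝ)/2) / 2 = (j:ℝ) / 2 * ((j:ℝ) ^ ((1:ℝ)/2))⁻¹ := by
            rw [div_mul_eq_mul_div, hxhalf]
        _ ≤ (j:ℝ) / 2 * (L (j:ℝ) ^ p)⁻¹ :=
            mul_le_mul_of_nonneg_left hinvle (by positivity)
        _ = (j:ℝ) / 2 * (4 * π / Real.log (j:ℝ)) ^ p := by rw [hainv]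
    have h0 : Tendsto (fun j : ℕ => d * ((j:ℝ) / 2 * (4 * π / Real.log j) ^ p)⁻¹)
        atTop (nhds 0) := by
      simpa using hmu_top.inv_tendsto_atTop.const_mul d
    have hcomb := (tendsto_const_nhds (x := (1:ℝ)) (f := atTop)).sub h0
    refine Tendsto.congr' ?_ (by simpa using hcomb)
    filter_upwards [hmu_top.eventually_gt_atTop 0] with j ht
    have hmuj : mu (j:ℝ) = (j:ℝ) / 2 * (4 * π / Real.log (j:ℝ)) ^ p - d := hmu (j:ℝ)
    rw [eq_div_iff ht.ne', hmuj]
    have hone : ((j:ℝ) / 2 * (4 * π / Real.log (j:ℝ)) ^ p)⁻¹ *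
        ((j:ℝ) / 2 * (4 * π / Real.log (j:ℝ)) ^ p) = 1 := inv_mul_cancel₀ ht.ne'
    linear_combination (-d) * hone
  · -- Part 3
    have hElam : ∀ᶠ j : ℕ in atTop,
        S (lam (j:ℝ) + dt) * (lam ((j:ℝ) + 1) - lam (j:ℝ)) ≤ 1 / 2 := by
      filter_upwards [tendsto_natCast_atTop_atTop.eventually_ge_atTop (1:ℝ),
        hLN.eventually_gt_atTop 0, hLN'.eventually_gt_atTop 0, hA_ev,
        hLN.eventually_ge_atTop c,
        (hloglogN'.const_mul_atTop hc0).eventually_ge_atTop (1/(4*π))]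
        with j hx1 hL hL' hA hcL h5
      set x : ℝ := (j:ℝ) with hx_def
      have hx0 : (0:ℝ) < x := by linarith
      have hL2 : 0 < Real.log x / (4*π) := hL
      have hlogx : 0 < Real.log x := by
        have h := mul_pos hL2 h4π
        rwa [div_mul_cancel₀ _ (ne_of_gt h4π)] at h
      have hlogle : Real.log x ≤ Real.log (x+1) := Real.log_le_log hx0 (by linarith)
      have hΔlog_le : Real.log (x+1) - Real.log x ≤ 1/x := by
        rw [show Real.log (x+1) - Real.log x = Real.log ((x+1)/x) from
          (Real.log_div (by positivity) (by positivity)).symm]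
        have h := Real.log_le_sub_one_of_pos (show (0:ℝ) < (x+1)/x by positivity)
        have he : (x+1)/x - 1 = 1/x := by field_simp; ring
        linarith
      have hLL' : L x ≤ L (x+1) := by
        simp only [hL_def]
        exact div_le_div_of_nonneg_right hlogle h4π.le
      have hlogL_mono : Real.log (L x) ≤ Real.log (L (x+1)) := Real.log_le_log hL hLL'
      have hAA' : A x ≤ A (x+1) := by
        have hdiff : Real.log (L (x+1)) - Real.log (L x) ≤ (L (x+1) - L x)/L x := by
          rw [show Real.log (L (x+1)) - Real.log (L x) = Real.log (L (x+1)/L x) from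
            (Real.log_div hL'.ne' hL.ne').symm]
          have h := Real.log_le_sub_one_of_pos (div_pos hL' hL)
          have he : L (x+1)/L x - 1 = (L (x+1) - L x)/L x := by field_simp
          linarith
        have hD : 0 ≤ L (x+1) - L x := by linarith
        have hkey : c * ((L (x+1) - L x)/L x) ≤ L (x+1) - L x := by
          rw [mul_div_assoc', div_le_iff₀ hL]
          nlinarith [mul_le_mul_of_nonneg_right hcL hD]
        have hmain : c * (Real.log (L (x+1)) - Real.log (L x)) ≤ L (x+1) - L x :=
          le_trans (mul_le_mul_of_nonneg_left hdiff hc0.le) hkey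
        simp only [hA_def]
        linarith
      have hA1 : 0 ≤ A (x+1) := hA.trans hAA'
      have hA'_le_L : A (x+1) ≤ L x := by
        have hΔL : L (x+1) - L x ≤ 1/(4*π) := by
          simp only [hL_def]
          rw [div_sub_div_same, div_le_div_iff₀ h4π h4π]
          have h1x : 1/x ≤ 1 := by rw [div_le_one hx0]; linarith
          have hle1 : Real.log (x+1) - Real.log x ≤ 1 := by linarith
          exact mul_le_mul_of_nonneg_right hle1 h4π.le
        have hlogs4 : Real.log s / (4*π) ≤ 0 :=
          div_nonpos_of_nonpos_of_nonneg (Real.log_nonpos hs0.le hs1.le) h4π.le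
        simp only [hA_def]
        linarith
      have hSx : S (lam x + dt) = 2*π * (x * s * (L x) ^ (-q)) := by
        rw [show lam x + dt = A x ^ p from by rw [hlamA]; ring, hS]
        congr 1
        rw [← Real.rpow_mul hA, hps, Real.rpow_one]
        have h4πA : 4*π*(A x) = Real.log x + Real.log s + (-q) * Real.log (L x) := by
          rw [← hcq]
          simp only [hA_def, hL_def]
          field_simp
          ring
        rw [h4πA, Real.exp_add, Real.exp_add, Real.exp_log hx0, Real.exp_log hs0,
          Real.rpow_def_of_pos hL, mul_comm (Real.log (L x)) (-q)]
      have hΔlam : lam (x+1) - lam x ≤ p * (L x)^q * (A (x+1) - A x) := by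
        rw [hlamA, hlamA]
        have h1 := aux_rpow_sub_le hA hAA' hp1
        have h2 : A (x+1) ^ (p-1) ≤ (L x) ^ (p-1) :=
          Real.rpow_le_rpow hA1 hA'_le_L (by linarith)
        have hΔA : 0 ≤ A (x+1) - A x := by linarith
        have h3 := mul_le_mul_of_nonneg_right
          (mul_le_mul_of_nonneg_left h2 hp0.le) hΔA
        calc A (x+1)^p - dt - (A x ^ p - dt) = A (x+1)^p - A x^p := by ring
          _ ≤ p * A (x+1)^(p-1) * (A (x+1) - A x) := h1
          _ ≤ p * (L x)^(p-1) * (A (x+1) - A x) := h3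
          _ = p * (L x)^q * (A (x+1) - A x) := by rw [hq]
      have hΔA_le : A (x+1) - A x ≤ 1/(4*π*x) := by
        have h1 : 0 ≤ c * (Real.log (L (x+1)) - Real.log (L x)) :=
          mul_nonneg hc0.le (by linarith)
        have h2 : L (x+1) - L x ≤ 1/(4*π*x) := by
          simp only [hL_def]
          rw [div_sub_div_same, div_le_div_iff₀ h4π (by positivity)]
          have hb := mul_le_mul_of_nonneg_right hΔlog_le
            (show (0:ℝ) ≤ 4*π*x by positivity)
          have hinv2 : 1/x * (4*π*x) = 4*π := by field_simp
          linarith [hb, hinv2]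
        simp only [hA_def]
        linarith
      have hLq : (L x)^(-q) * (L x)^q = 1 := by
        rw [← Real.rpow_add hL]; simp
      calc S (lam x + dt) * (lam (x+1) - lam x)
          ≤ 2*π*(x * s * (L x)^(-q)) * (p * (L x)^q * (A (x+1) - A x)) := by
            rw [hSx]
            exact mul_le_mul_of_nonneg_left hΔlam (by positivity)
        _ = 2*π*x*(A (x+1) - A x) * (s*p) * ((L x)^(-q) * (L x)^q) := by ring
        _ = 2*π*x*(A (x+1) - A x) := by
            rw [hLq, mul_comm s p, hps]; ring
        _ ≤ 2*π*x*(1/(4*π*x)) :=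
            mul_le_mul_of_nonneg_left hΔA_le (by positivity)
        _ = 1/2 := by field_simp; ring
    have hEmu : ∀ᶠ j : ℕ in atTop,
        Sinv (mu (j:ℝ) + d) * (mu ((j:ℝ) + 1) - mu (j:ℝ)) ≤ 1 / 2 := by
      filter_upwards [tendsto_natCast_atTop_atTop.eventually_ge_atTop (1:ℝ),
        hlogN.eventually_gt_atTop 0,
        ((Real.tendsto_log_atTop.comp hlogN).const_mul_atTop hp0).eventually_ge_atTop
          ((p-1)*Real.log (4*π)),
        ((aux_sub_log p).comp hlogN).eventually_ge_atTop ((1-p)*Real.log (4*π))]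
        with j hx1 hlogx hF3 hF4
      set x : ℝ := (j:ℝ) with hx_def
      have hx0 : (0:ℝ) < x := by linarith
      have hlogx' : 0 < Real.log (x+1) :=
        lt_of_lt_of_le hlogx (Real.log_le_log hx0 (by linarith))
      have hBval : Real.log ((mu x + d)/(2*π)) =
          Real.log x - Real.log (4*π) + p*(Real.log (4*π) - Real.log (Real.log x)) := by
        rw [hmuA x]
        rw [show (x/2 * (4*π/Real.log x)^p) / (2*π) = x/(4*π) * (4*π/Real.log x)^p from by
          field_simp; ring]
        rw [Real.log_mul (by positivity) (ne_of_gt (Real.rpow_pos_of_pos (by positivity) p)),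
          Real.log_div (ne_of_gt hx0) (ne_of_gt h4π), Real.log_rpow (by positivity),
          Real.log_div (ne_of_gt h4π) (ne_of_gt hlogx)]
      have hSmu : Sinv (mu x + d) = (1/(4*π) * (Real.log x - Real.log (4*π) +
          p*(Real.log (4*π) - Real.log (Real.log x))))^p := by
        rw [hSinv, hBval]
      have hB0 : 0 ≤ 1/(4*π) * (Real.log x - Real.log (4*π) +
          p*(Real.log (4*π) - Real.log (Real.log x))) := by
        have : (1-p)*Real.log (4*π) ≤ Real.log x - p * Real.log (Real.log x) := hF4
        apply mul_nonneg (by positivity)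
        nlinarith
      have hBL : 1/(4*π) * (Real.log x - Real.log (4*π) +
          p*(Real.log (4*π) - Real.log (Real.log x))) ≤ L x := by
        have hbr : (p-1)*Real.log (4*π) - p * Real.log (Real.log x) ≤ 0 := by
          have : (p-1)*Real.log (4*π) ≤ p * Real.log (Real.log x) := hF3
          linarith
        have hnp : (1:ℝ)/(4*π) * ((p-1)*Real.log (4*π) - p*Real.log (Real.log x)) ≤ 0 :=
          mul_nonpos_of_nonneg_of_nonpos (by positivity) hbr
        have hexpand : 1/(4*π) * (Real.log x - Real.log (4*π) +
            p*(Real.log (4*π) - Real.log (Real.log x))) =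
            Real.log x/(4*π) + 1/(4*π)*((p-1)*Real.log (4*π) - p*Real.log (Real.log x)) := by
          ring
        simp only [hL_def]
        linarith
      have hSle : Sinv (mu x + d) ≤ (L x)^p := by
        rw [hSmu]; exact Real.rpow_le_rpow hB0 hBL hp0.le
      have hS0' : 0 ≤ Sinv (mu x + d) := by
        rw [hSmu]; exact Real.rpow_nonneg hB0 _
      have ha0 : 0 ≤ (4*π/Real.log x)^p := Real.rpow_nonneg (by positivity) _
      have hLx : 0 < L x := by simp only [hL_def]; positivity
      have ha'a : (4*π/Real.log (x+1))^p ≤ (4*π/Real.log x)^p :=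
        Real.rpow_le_rpow (by positivity)
          (div_le_div_of_nonneg_left h4π.le hlogx (Real.log_le_log hx0 (by linarith))) hp0.le
      have hΔmu : mu (x+1) - mu x ≤ (4*π/Real.log x)^p / 2 := by
        rw [hmu, hmu]
        have hmm := mul_le_mul_of_nonneg_left ha'a (show (0:ℝ) ≤ (x+1)/2 by positivity)
        linarith
      calc Sinv (mu x + d) * (mu (x+1) - mu x)
          ≤ Sinv (mu x + d) * ((4*π/Real.log x)^p / 2) :=
            mul_le_mul_of_nonneg_left hΔmu hS0'
        _ ≤ (L x)^p * ((4*π/Real.log x)^p / 2) :=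
            mul_le_mul_of_nonneg_right hSle (by positivity)
        _ = ((L x * (4*π/Real.log x))^p) / 2 := by
            rw [Real.mul_rpow hLx.le (by positivity)]
            ring
        _ = 1/2 := by
            rw [show L x * (4*π/Real.log x) = 1 from by
              simp only [hL_def]; field_simp, Real.one_rpow]
    obtain ⟨J, hJ⟩ := eventually_atTop.mp (hElam.and hEmu)
    exact ⟨J, fun j hj => hJ j hj⟩
end

section
/- Let S : [0,∞) → [0,∞) be unbounded, continuously differentiable, strictly increasing with S(0)=0, let α > 0, and let Λ = (λ_j) and M = (μ_j) be strictly increasing doubly infinite real sequences tending to ±∞ satisfying lim_{j→±∞} S(|λ_j|)(λ_{j+1}−λ_j) = α and lim_{j→±∞} S⁻¹(|μ_j|)(μ_{j+1}−μ_j) = α. Then inf_{W,T ≥ K} (|Λ∩[−T,T]| + |M∩[−W,W]|)/(4WT) → 1/(2α) as K → ∞. -/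
open Set Filter MeasureTheory

lemma ico_succ (J P : ℤ) (h : J ≤ P) : Finset.Ico J (P+1) = insert P (Finset.Ico J P) := by
  ext k; simp only [Finset.mem_Ico, Finset.mem_insert]; omega

lemma tele_sum (v : ℤ → ℝ) (J : ℤ) : ∀ P, J ≤ P →
    ∑ j ∈ Finset.Ico J P, (v (j+1) - v j) = v P - v J := by
  refine Int.le_induction ?_ ?_
  · simp
  · intro P hP ih
    rw [ico_succ J P hP, Finset.sum_insert (by simp), ih]; ring

lemma int_sum (f : ℝ → ℝ) (hf : ∀ a b : ℝ, IntervalIntegrable f volume a b)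
    (x : ℤ → ℝ) (J : ℤ) : ∀ P, J ≤ P →
    ∑ j ∈ Finset.Ico J P, ∫ t in (x j)..(x (j+1)), f t = ∫ t in (x J)..(x P), f t := by
  refine Int.le_induction ?_ ?_
  · simp
  · intro P hP ih
    rw [ico_succ J P hP, Finset.sum_insert (by simp), ih, add_comm,
      intervalIntegral.integral_add_adjacent_intervals (hf _ _) (hf _ _)]
lemma side_main (fb : ℝ → ℝ) (hmono : Monotone fb) (hnnf : ∀ t, 0 ≤ fb t)
    (x : ℤ → ℝ) (hx : StrictMono x) (hxtop : Tendsto x atTop atTop)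
    (α₁ α₂ s₀ : ℝ) (hα₁ : 0 < α₁) (hs₀ : 0 < s₀) (J : ℤ) (hxJ : 1 ≤ x J)
    (hs : ∀ t, 1 ≤ t → s₀ ≤ fb t)
    (hgap : ∀ j, J ≤ j → ∃ y, x j ≤ y ∧ y ≤ x (j + 1) ∧
      α₁ ≤ fb y * (x (j+1) - x j) ∧ fb y * (x (j+1) - x j) ≤ α₂)
    (T W : ℝ) (hT : x J ≤ T) (hW : 0 < W) :
    ∃ P : ℤ, J ≤ P ∧ x P ≤ T ∧ (∀ j : ℤ, x j ≤ T → j ≤ P) ∧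
      (∫ t in (0:ℝ)..T, min (fb t) W) ≤ α₂ * ((P:ℝ) - (J:ℝ)) + W * (x J + 2 * (α₂/s₀)) ∧
      (fb T ≤ W → α₁ * ((P:ℝ) - (J:ℝ)) ≤ (∫ t in (0:ℝ)..T, min (fb t) W) + (α₂/s₀) * W) := by
  have hxmono := hx.monotone
  have h0J : (0:ℝ) ≤ x J := le_trans zero_le_one hxJ
  set G := α₂ / s₀ with hGdef
  -- α₂ positive
  obtain ⟨y0, hy01, hy02, hy03, hy04⟩ := hgap J le_rfl
  have hα₂ : 0 < α₂ := lt_of_lt_of_le hα₁ (le_trans hy03 hy04)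
  have hG0 : 0 ≤ G := le_of_lt (div_pos hα₂ hs₀)
  set fmin := fun t => min (fb t) W with hfmin
  have hm : Monotone fmin := hmono.min monotone_const
  have hint : ∀ a b : ℝ, IntervalIntegrable fmin volume a b :=
    fun a b => (hm.monotoneOn _).intervalIntegrable
  have hfmin_nonneg : ∀ t, 0 ≤ fmin t := fun t => le_min (hnnf t) hW.le
  have hminW : ∀ t, fmin t ≤ W := fun t => min_le_right _ _
  -- gap length bound
  have hgapG : ∀ j, J ≤ j → x (j+1) - x j ≤ G := by
    intro j hj
    obtain ⟨y, hy1, hy2, hy3, hy4⟩ := hgap j hj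
    have hy1' : (1:ℝ) ≤ y := le_trans hxJ (le_trans (hxmono hj) hy1)
    have hfy : s₀ ≤ fb y := hs y hy1'
    have hfy0 : 0 < fb y := lt_of_lt_of_le hs₀ hfy
    have hgpos : 0 < x (j+1) - x j := sub_pos.2 (hx (lt_add_one j))
    rw [hGdef]
    rw [le_div_iff₀ hs₀]
    calc (x (j+1) - x j) * s₀ ≤ (x (j+1) - x j) * fb y :=
          mul_le_mul_of_nonneg_left hfy hgpos.le
    _ = fb y * (x (j+1) - x j) := by ring
    _ ≤ α₂ := hy4
  -- existence of maximal P
  have hbdd : ∃ b : ℤ, ∀ z : ℤ, x z ≤ T → z ≤ b := by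
    obtain ⟨b, hb⟩ := (hxtop.eventually_gt_atTop T).exists_forall_of_atTop
    exact ⟨b, fun z hz => by
      by_contra h
      exact absurd (hb z (le_of_not_ge h)) (not_lt.2 hz)⟩
  obtain ⟨P, hPle, hPmax⟩ := Int.exists_greatest_of_bdd hbdd ⟨J, hT⟩
  have hJP : J ≤ P := hPmax J hT
  have hJPr : (J:ℝ) ≤ (P:ℝ) := by exact_mod_cast hJP
  have hTlt : T < x (P+1) := by
    by_contra h
    have := hPmax (P+1) (le_of_not_gt h)
    omega
  have hcard : ((Finset.Ico J P).card : ℝ) = (P:ℝ) - (J:ℝ) := by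
    rw [Int.card_Ico]
    have h1 : (((P - J).toNat : ℤ) : ℝ) = ((P:ℝ) - (J:ℝ)) := by
      rw [Int.toNat_of_nonneg (sub_nonneg.2 hJP)]; push_cast; ring
    exact_mod_cast h1
  -- per-gap upper bound
  have gapA : ∀ j ∈ Finset.Ico J P, (∫ t in (x j)..(x (j+1)), fmin t)
      ≤ α₂ + G * (fmin (x (j+1)) - fmin (x j)) := by
    intro j hj
    rw [Finset.mem_Ico] at hj
    obtain ⟨y, hy1, hy2, hy3, hy4⟩ := hgap j hj.1
    have hjj : x j ≤ x (j+1) := (hx (lt_add_one j)).le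
    have hIub : (∫ t in (x j)..(x (j+1)), fmin t) ≤ (x (j+1) - x j) * fmin (x (j+1)) := by
      have h := intervalIntegral.integral_mono_on hjj (hint _ _)
        (intervalIntegrable_const) (fun t ht => hm ht.2)
      rwa [intervalIntegral.integral_const, smul_eq_mul] at h
    have h1 : (x (j+1) - x j) * fmin (x j) ≤ α₂ := by
      have hle : fmin (x j) ≤ fb y := le_trans (min_le_left _ _) (hmono hy1)
      calc (x (j+1) - x j) * fmin (x j) ≤ (x (j+1) - x j) * fb y :=
            mul_le_mul_of_nonneg_left hle (sub_nonneg.2 hjj)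
      _ = fb y * (x (j+1) - x j) := by ring
      _ ≤ α₂ := hy4
    have h2 : (x (j+1) - x j) * (fmin (x (j+1)) - fmin (x j))
        ≤ G * (fmin (x (j+1)) - fmin (x j)) :=
      mul_le_mul_of_nonneg_right (hgapG j hj.1) (sub_nonneg.2 (hm hjj))
    calc (∫ t in (x j)..(x (j+1)), fmin t) ≤ (x (j+1) - x j) * fmin (x (j+1)) := hIub
    _ = (x (j+1) - x j) * fmin (x j) + (x (j+1) - x j) * (fmin (x (j+1)) - fmin (x j)) := by ring
    _ ≤ α₂ + G * (fmin (x (j+1)) - fmin (x j)) := add_le_add h1 h2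
  have hsumA : (∫ t in (x J)..(x P), fmin t) ≤ α₂ * ((P:ℝ) - (J:ℝ)) + G * W := by
    rw [← int_sum fmin hint x J P hJP]
    calc ∑ j ∈ Finset.Ico J P, ∫ t in (x j)..(x (j+1)), fmin t
        ≤ ∑ j ∈ Finset.Ico J P, (α₂ + G * (fmin (x (j+1)) - fmin (x j))) :=
          Finset.sum_le_sum gapA
    _ = α₂ * ((P:ℝ) - (J:ℝ)) + G * (fmin (x P) - fmin (x J)) := by
        rw [Finset.sum_add_distrib, Finset.sum_const, ← Finset.mul_sum,
          tele_sum (fun j => fmin (x j)) J P hJP, nsmul_eq_mul, hcard, mul_comm]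
    _ ≤ α₂ * ((P:ℝ) - (J:ℝ)) + G * W := by
        have : fmin (x P) - fmin (x J) ≤ W := by
          have := hminW (x P); have := hfmin_nonneg (x J); linarith
        exact add_le_add_right (mul_le_mul_of_nonneg_left this hG0) _
  have e1 := intervalIntegral.integral_add_adjacent_intervals (hint 0 (x J)) (hint (x J) (x P))
  have e2 := intervalIntegral.integral_add_adjacent_intervals (hint 0 (x P)) (hint (x P) T)
  have hI1ub : (∫ t in (0:ℝ)..(x J), fmin t) ≤ W * x J := by
    have h := intervalIntegral.integral_mono_on h0J (hint _ _)
      (intervalIntegrable_const) (fun t _ => hminW t)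
    rw [intervalIntegral.integral_const, smul_eq_mul] at h
    calc (∫ t in (0:ℝ)..(x J), fmin t) ≤ (x J - 0) * W := h
    _ = W * x J := by ring
  have hI3ub : (∫ t in (x P)..T, fmin t) ≤ G * W := by
    have h := intervalIntegral.integral_mono_on hPle (hint _ _)
      (intervalIntegrable_const) (fun t _ => hminW t)
    rw [intervalIntegral.integral_const, smul_eq_mul] at h
    have hTP : T - x P ≤ G := by
      have := hgapG P hJP
      linarith
    calc (∫ t in (x P)..T, fmin t) ≤ (T - x P) * W := h
    _ ≤ G * W := mul_le_mul_of_nonneg_right hTP hW.le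
  have hI1nn : 0 ≤ (∫ t in (0:ℝ)..(x J), fmin t) :=
    intervalIntegral.integral_nonneg h0J (fun t _ => hfmin_nonneg t)
  have hI3nn : 0 ≤ (∫ t in (x P)..T, fmin t) :=
    intervalIntegral.integral_nonneg hPle (fun t _ => hfmin_nonneg t)
  refine ⟨P, hJP, hPle, hPmax, ?_, ?_⟩
  · -- (A)
    have : (∫ t in (0:ℝ)..T, fmin t) = (∫ t in (0:ℝ)..(x J), fmin t)
        + (∫ t in (x J)..(x P), fmin t) + (∫ t in (x P)..T, fmin t) := by
      rw [e1, e2]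
    rw [hfmin] at this hsumA hI1ub hI3ub ⊢
    rw [this]
    linarith
  · -- (B)
    intro hfT
    have gapB : ∀ j ∈ Finset.Ico J P,
        α₁ ≤ (∫ t in (x j)..(x (j+1)), fmin t) + G * (fmin (x (j+1)) - fmin (x j)) := by
      intro j hj
      rw [Finset.mem_Ico] at hj
      obtain ⟨y, hy1, hy2, hy3, hy4⟩ := hgap j hj.1
      have hjj : x j ≤ x (j+1) := (hx (lt_add_one j)).le
      have hgnn : 0 ≤ x (j+1) - x j := sub_nonneg.2 hjj
      have hj1P : x (j+1) ≤ x P := hxmono (by omega)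
      have hfyW : fb y ≤ W := by
        calc fb y ≤ fb T := hmono (le_trans hy2 (le_trans hj1P hPle))
        _ ≤ W := hfT
      have hfy_min : fb y = fmin y := by
        simp only [hfmin]
        exact (min_eq_left hfyW).symm
      have hIlb : fmin (x j) * (x (j+1) - x j) ≤ (∫ t in (x j)..(x (j+1)), fmin t) := by
        have h := intervalIntegral.integral_mono_on hjj
          (intervalIntegrable_const) (hint _ _) (fun t ht => hm ht.1)
        rw [intervalIntegral.integral_const, smul_eq_mul] at h
        calc fmin (x j) * (x (j+1) - x j) = (x (j+1) - x j) * fmin (x j) := by ring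
        _ ≤ _ := h
      have hstep : α₁ ≤ fmin (x (j+1)) * (x (j+1) - x j) := by
        calc α₁ ≤ fb y * (x (j+1) - x j) := hy3
        _ = fmin y * (x (j+1) - x j) := by rw [hfy_min]
        _ ≤ fmin (x (j+1)) * (x (j+1) - x j) :=
            mul_le_mul_of_nonneg_right (hm hy2) hgnn
      have hΔ : (fmin (x (j+1)) - fmin (x j)) * (x (j+1) - x j)
          ≤ G * (fmin (x (j+1)) - fmin (x j)) := by
        calc (fmin (x (j+1)) - fmin (x j)) * (x (j+1) - x j)
            ≤ (fmin (x (j+1)) - fmin (x j)) * G :=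
              mul_le_mul_of_nonneg_left (hgapG j hj.1) (sub_nonneg.2 (hm hjj))
        _ = G * (fmin (x (j+1)) - fmin (x j)) := by ring
      nlinarith [hIlb, hstep, hΔ]
    have hsumB : α₁ * ((P:ℝ) - (J:ℝ))
        ≤ (∫ t in (x J)..(x P), fmin t) + G * (fmin (x P) - fmin (x J)) := by
      have h := Finset.sum_le_sum gapB
      rw [Finset.sum_const, Finset.sum_add_distrib, ← Finset.mul_sum,
        tele_sum (fun j => fmin (x j)) J P hJP, int_sum fmin hint x J P hJP,
        nsmul_eq_mul, hcard] at h
      linarith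
    have hfin : (∫ t in (x J)..(x P), fmin t) ≤ (∫ t in (0:ℝ)..T, fmin t) := by
      have : (∫ t in (0:ℝ)..T, fmin t) = (∫ t in (0:ℝ)..(x J), fmin t)
          + (∫ t in (x J)..(x P), fmin t) + (∫ t in (x P)..T, fmin t) := by
        rw [e1, e2]
      linarith
    have hGW : G * (fmin (x P) - fmin (x J)) ≤ G * W := by
      have h1 := hminW (x P); have h2 := hfmin_nonneg (x J)
      exact mul_le_mul_of_nonneg_left (by linarith) hG0
    rw [hfmin] at hsumB hfin ⊢
    linarith

lemma area_eq (Sb SIb : ℝ → ℝ) (hSb : Monotone Sb) (hSIb : Monotone SIb)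
    (hnnS : ∀ t, 0 ≤ Sb t) (hnnI : ∀ t, 0 ≤ SIb t)
    (hgal : ∀ x y : ℝ, 0 ≤ x → 0 ≤ y → (Sb x ≤ y ↔ x ≤ SIb y))
    (T W : ℝ) (hT : 0 ≤ T) (hW : 0 ≤ W) :
    (∫ t in (0:ℝ)..T, min (Sb t) W) + (∫ t in (0:ℝ)..W, min (SIb t) T) = W * T := by
  set E : Set (ℝ × ℝ) := {p | p.1 ∈ Icc (0:ℝ) T ∧ p.2 ∈ Icc (0:ℝ) W ∧ Sb p.1 ≤ p.2} with hE
  have hEm : MeasurableSet E := by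
    apply MeasurableSet.inter (measurableSet_Icc.preimage measurable_fst)
    exact MeasurableSet.inter (measurableSet_Icc.preimage measurable_snd)
      (measurableSet_le (hSb.measurable.comp measurable_fst) measurable_snd)
  -- integrability facts
  have hmin1 : Monotone (fun t => min (Sb t) W) := hSb.min monotone_const
  have hmin2 : Monotone (fun t => min (SIb t) T) := hSIb.min monotone_const
  have hint1 : IntegrableOn (fun t => min (Sb t) W) (Icc 0 T) volume :=
    (hmin1.monotoneOn _).integrableOn_isCompact isCompact_Icc
  have hint2 : IntegrableOn (fun t => min (SIb t) T) (Icc 0 W) volume :=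
    (hmin2.monotoneOn _).integrableOn_isCompact isCompact_Icc
  -- first slicing
  have h1 : volume E = ENNReal.ofReal (W * T - ∫ t in Icc (0:ℝ) T, min (Sb t) W) := by
    have : (volume : Measure (ℝ × ℝ)) = (volume : Measure ℝ).prod volume := rfl
    rw [this, Measure.prod_apply hEm]
    have hslice : (fun x => volume (Prod.mk x ⁻¹' E))
        = (Icc (0:ℝ) T).indicator (fun x => ENNReal.ofReal (W - min (Sb x) W)) := by
      funext a
      by_cases ha : a ∈ Icc (0:ℝ) T
      · have hpre : Prod.mk a ⁻¹' E = Icc (max (Sb a) 0) W := by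
          ext y
          simp only [hE, mem_preimage, mem_setOf_eq, mem_Icc, max_le_iff]
          constructor
          · rintro ⟨_, ⟨h1, h2⟩, h3⟩; exact ⟨⟨h3, h1⟩, h2⟩
          · rintro ⟨⟨h3, h1⟩, h2⟩; exact ⟨ha, ⟨h1, h2⟩, h3⟩
        rw [hpre, Real.volume_Icc, indicator_of_mem ha]
        rw [max_eq_left (hnnS a)]
        rcases le_total (Sb a) W with h | h
        · rw [min_eq_left h]
        · rw [min_eq_right h, sub_self, ENNReal.ofReal_zero,
            ENNReal.ofReal_eq_zero]
          linarith
      · rw [indicator_of_notMem ha]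
        have : Prod.mk a ⁻¹' E = ∅ := by
          ext y; simp only [hE, mem_preimage, mem_setOf_eq, mem_empty_iff_false, iff_false]
          intro hc; exact ha hc.1
        rw [this]; simp
    rw [hslice, lintegral_indicator measurableSet_Icc,
      ← ofReal_integral_eq_lintegral_ofReal]
    · congr 1
      rw [integral_sub (integrableOn_const (C := W) (by rw [Real.volume_Icc]; exact ENNReal.ofReal_ne_top)) hint1]
      rw [setIntegral_const, Real.volume_real_Icc_of_le hT, smul_eq_mul]
      ring_nf
    · exact (integrableOn_const (C := W) (by rw [Real.volume_Icc]; exact ENNReal.ofReal_ne_top)).sub hint1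
    · filter_upwards with t
      simp only [Pi.zero_apply, sub_nonneg]
      exact min_le_right _ _
  -- second slicing
  have h2 : volume E = ENNReal.ofReal (∫ t in Icc (0:ℝ) W, min (SIb t) T) := by
    have : (volume : Measure (ℝ × ℝ)) = (volume : Measure ℝ).prod volume := rfl
    rw [this, Measure.prod_apply_symm hEm]
    have hslice : (fun y => volume ((fun x => (x, y)) ⁻¹' E))
        = (Icc (0:ℝ) W).indicator (fun y => ENNReal.ofReal (min (SIb y) T)) := by
      funext b
      by_cases hb : b ∈ Icc (0:ℝ) W
      · have hpre : (fun x => (x, b)) ⁻¹' E = Icc 0 (min (SIb b) T) := by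
          ext a
          simp only [hE, mem_preimage, mem_setOf_eq, mem_Icc, le_min_iff]
          constructor
          · rintro ⟨⟨h1, h2⟩, _, h3⟩
            exact ⟨h1, (hgal a b h1 hb.1).1 h3, h2⟩
          · rintro ⟨h1, h2, h3⟩
            exact ⟨⟨h1, h3⟩, hb, (hgal a b h1 hb.1).2 h2⟩
        rw [hpre, Real.volume_Icc, indicator_of_mem hb, sub_zero]
      · rw [indicator_of_notMem hb]
        have : (fun x => (x, b)) ⁻¹' E = ∅ := by
          ext a; simp only [hE, mem_preimage, mem_setOf_eq, mem_empty_iff_false, iff_false]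
          intro hc; exact hb hc.2.1
        rw [this]; simp
    rw [hslice, lintegral_indicator measurableSet_Icc,
      ← ofReal_integral_eq_lintegral_ofReal hint2]
    filter_upwards with t
    simp only [Pi.zero_apply]
    exact le_min (hnnI t) hT
  -- combine
  have hFle : (∫ t in Icc (0:ℝ) T, min (Sb t) W) ≤ W * T := by
    calc (∫ t in Icc (0:ℝ) T, min (Sb t) W) ≤ ∫ t in Icc (0:ℝ) T, W := by
          apply setIntegral_mono_on hint1
            (integrableOn_const (C := W) (by rw [Real.volume_Icc]; exact ENNReal.ofReal_ne_top))
            measurableSet_Icc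
          intro t _; exact min_le_right _ _
    _ = W * T := by
        rw [setIntegral_const, Real.volume_real_Icc_of_le hT, smul_eq_mul]
        ring
  have hFnn : 0 ≤ (∫ t in Icc (0:ℝ) T, min (Sb t) W) :=
    setIntegral_nonneg measurableSet_Icc (fun t _ => le_min (hnnS t) hW)
  have hGnn : 0 ≤ (∫ t in Icc (0:ℝ) W, min (SIb t) T) :=
    setIntegral_nonneg measurableSet_Icc (fun t _ => le_min (hnnI t) hT)
  have heq : W * T - (∫ t in Icc (0:ℝ) T, min (Sb t) W)
      = (∫ t in Icc (0:ℝ) W, min (SIb t) T) := by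
    have := h1.symm.trans h2
    rwa [ENNReal.ofReal_eq_ofReal_iff (by linarith) hGnn] at this
  have hic1 : (∫ t in (0:ℝ)..T, min (Sb t) W) = ∫ t in Icc (0:ℝ) T, min (Sb t) W := by
    rw [intervalIntegral.integral_of_le hT, integral_Icc_eq_integral_Ioc]
  have hic2 : (∫ t in (0:ℝ)..W, min (SIb t) T) = ∫ t in Icc (0:ℝ) W, min (SIb t) T := by
    rw [intervalIntegral.integral_of_le hW, integral_Icc_eq_integral_Ioc]
  rw [hic1, hic2]
  linarith

lemma count_bounds (Λ : ℤ → ℝ) (T : ℝ) (hT1 : 1 ≤ T) (Jp Jn P1 P2 : ℤ)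
    (hJp : 1 ≤ Jp) (hJn : 1 ≤ Jn) (hP1 : Jp ≤ P1) (hP2 : Jn ≤ P2)
    (hmono : Monotone Λ)
    (hP1le : Λ P1 ≤ T) (hP1max : ∀ j : ℤ, Λ j ≤ T → j ≤ P1)
    (hP2le : -Λ (-P2) ≤ T) (hP2max : ∀ j : ℤ, -Λ (-j) ≤ T → j ≤ P2)
    (hJp1 : 1 ≤ Λ Jp) (hJn1 : 1 ≤ -Λ (-Jn)) :
    ((P1:ℝ) - Jp) + ((P2:ℝ) - Jn) ≤ (Nat.card {j : ℤ | Λ j ∈ Icc (-T) T} : ℝ) ∧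
    (Nat.card {j : ℤ | Λ j ∈ Icc (-T) T} : ℝ)
      ≤ ((P1:ℝ) - Jp) + ((P2:ℝ) - Jn) + ((Jp:ℝ) + (Jn:ℝ) + 1) := by
  set s : Set ℤ := {j : ℤ | Λ j ∈ Icc (-T) T} with hs
  have hsub2 : s ⊆ ↑(Finset.Icc (-P2) P1) := by
    intro j hj
    simp only [hs, mem_setOf_eq, mem_Icc] at hj
    simp only [Finset.coe_Icc, mem_Icc]
    constructor
    · have : -Λ (-(-j)) ≤ T := by rw [neg_neg]; linarith [hj.1]
      have := hP2max (-j) this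
      omega
    · exact hP1max j hj.2
  have hfin : s.Finite := Set.Finite.subset (Finset.finite_toSet _) hsub2
  have hcard : (Nat.card s : ℝ) = (s.ncard : ℝ) := by rw [Nat.card_coe_set_eq]
  constructor
  · -- lower bound
    set F1 := Finset.Icc Jp P1 with hF1
    set F2 := Finset.Icc (-P2) (-Jn) with hF2
    have hdisj : Disjoint F1 F2 := by
      rw [Finset.disjoint_left]
      intro j hj1 hj2
      rw [hF1, Finset.mem_Icc] at hj1
      rw [hF2, Finset.mem_Icc] at hj2
      omega
    have hsub1 : ↑(F1 ∪ F2) ⊆ s := by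
      intro j hj
      rw [hF1, hF2] at hj
      simp only [Finset.coe_union, mem_union, Finset.coe_Icc, mem_Icc] at hj
      simp only [hs, mem_setOf_eq, mem_Icc]
      rcases hj with ⟨h1, h2⟩ | ⟨h1, h2⟩
      · constructor
        · have : Λ Jp ≤ Λ j := hmono h1
          linarith
        · have : Λ j ≤ Λ P1 := hmono h2
          linarith
      · constructor
        · have : Λ (-P2) ≤ Λ j := hmono h1
          linarith
        · have : Λ j ≤ Λ (-Jn) := hmono h2
          linarith
    have h1 : (F1 ∪ F2).card ≤ s.ncard := by
      rw [← Set.ncard_coe_finset]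
      exact Set.ncard_le_ncard hsub1 hfin
    have h2 : (F1 ∪ F2).card = F1.card + F2.card := Finset.card_union_of_disjoint hdisj
    have h3 : (F1.card : ℝ) = (P1:ℝ) + 1 - Jp := by
      rw [hF1, Int.card_Icc]
      have : (((P1 + 1 - Jp).toNat : ℤ) : ℝ) = (P1:ℝ) + 1 - Jp := by
        rw [Int.toNat_of_nonneg (by omega)]; push_cast; ring
      exact_mod_cast this
    have h4 : (F2.card : ℝ) = (P2:ℝ) + 1 - Jn := by
      rw [hF2, Int.card_Icc]
      have : (((-Jn + 1 - -P2).toNat : ℤ) : ℝ) = (P2:ℝ) + 1 - Jn := by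
        rw [Int.toNat_of_nonneg (by omega)]; push_cast; ring
      exact_mod_cast this
    have h5 : ((F1 ∪ F2).card : ℝ) ≤ (s.ncard : ℝ) := by exact_mod_cast h1
    rw [hcard]
    have : ((F1 ∪ F2).card : ℝ) = (F1.card : ℝ) + (F2.card : ℝ) := by exact_mod_cast h2
    linarith
  · -- upper bound
    have h1 : s.ncard ≤ (Finset.Icc (-P2) P1).card :=
      le_trans (Set.ncard_le_ncard hsub2 (Finset.finite_toSet _))
        (le_of_eq (Set.ncard_coe_finset _))
    have h2 : ((Finset.Icc (-P2) P1).card : ℝ) = (P1:ℝ) + 1 + P2 := by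
      rw [Int.card_Icc]
      have : (((P1 + 1 - -P2).toNat : ℤ) : ℝ) = (P1:ℝ) + 1 + P2 := by
        rw [Int.toNat_of_nonneg (by omega)]; push_cast; ring
      exact_mod_cast this
    have h1' : (s.ncard : ℝ) ≤ ((Finset.Icc (-P2) P1).card : ℝ) := by exact_mod_cast h1
    rw [hcard]
    linarith

lemma side_package_top (g fb : ℝ → ℝ) (hgfb : ∀ t : ℝ, 1 ≤ t → g t = fb t)
    (Λ : ℤ → ℝ) (hΛm : Monotone Λ) (hΛtop : Tendsto Λ atTop atTop) (α₁ α₂ : ℝ)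
    (hev : ∀ᶠ j : ℤ in atTop, g (Λ j) * (Λ (j+1) - Λ j) ∈ Ioo α₁ α₂) :
    ∃ J : ℤ, 1 ≤ J ∧ 1 ≤ Λ J ∧ ∀ j, J ≤ j → ∃ y, Λ j ≤ y ∧ y ≤ Λ (j+1) ∧
      α₁ ≤ fb y * (Λ (j+1) - Λ j) ∧ fb y * (Λ (j+1) - Λ j) ≤ α₂ := by
  obtain ⟨J0, hJ0⟩ := eventually_atTop.1 (hev.and (hΛtop.eventually_ge_atTop 1))
  refine ⟨max J0 1, le_max_right _ _, (hJ0 (max J0 1) (le_max_left _ _)).2, ?_⟩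
  intro j hj
  have hj0 : J0 ≤ j := le_trans (le_max_left _ _) hj
  obtain ⟨⟨h1, h2⟩, h3⟩ := hJ0 j hj0
  refine ⟨Λ j, le_refl _, ?_, ?_, ?_⟩
  · exact hΛm (by omega)
  · rw [← hgfb (Λ j) h3]; exact h1.le
  · rw [← hgfb (Λ j) h3]; exact h2.le

lemma side_package_bot (g fb : ℝ → ℝ) (hgfb : ∀ t : ℝ, 1 ≤ t → g (-t) = fb t)
    (Λ : ℤ → ℝ) (hΛm : Monotone Λ) (hΛbot : Tendsto Λ atBot atBot) (α₁ α₂ : ℝ)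
    (hev : ∀ᶠ j : ℤ in atBot, g (Λ j) * (Λ (j+1) - Λ j) ∈ Ioo α₁ α₂) :
    ∃ J : ℤ, 1 ≤ J ∧ 1 ≤ -Λ (-J) ∧ ∀ j, J ≤ j → ∃ y, -Λ (-j) ≤ y ∧ y ≤ -Λ (-(j+1)) ∧
      α₁ ≤ fb y * (-Λ (-(j+1)) - -Λ (-j)) ∧ fb y * (-Λ (-(j+1)) - -Λ (-j)) ≤ α₂ := by
  obtain ⟨J0, hJ0⟩ := eventually_atBot.1 (hev.and (hΛbot.eventually_le_atBot (-1)))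
  refine ⟨max (-J0) 1, le_max_right _ _, ?_, ?_⟩
  · have := (hJ0 (-(max (-J0) 1)) (by omega)).2
    linarith
  · intro j hj
    have hj0 : -j - 1 ≤ J0 := by omega
    obtain ⟨⟨h1, h2⟩, h3⟩ := hJ0 (-j-1) hj0
    have hy1 : (1:ℝ) ≤ -Λ (-j-1) := by linarith
    have e1 : Λ (-(j+1)) = Λ (-j-1) := by congr 1; ring
    have e2 : Λ (-j-1+1) = Λ (-j) := by congr 1; ring
    rw [e2] at h1 h2
    have e3 : g (Λ (-j-1)) = fb (-Λ (-j-1)) := by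
      rw [← hgfb (-Λ (-j-1)) hy1, neg_neg]
    rw [e3] at h1 h2
    refine ⟨-Λ (-(j+1)), ?_, le_refl _, ?_, ?_⟩
    · have : Λ (-(j+1)) ≤ Λ (-j) := hΛm (by omega)
      linarith
    · rw [e1]
      calc α₁ ≤ fb (-Λ (-j-1)) * (Λ (-j) - Λ (-j-1)) := h1.le
      _ = fb (-Λ (-j-1)) * (-Λ (-j-1) - -Λ (-j)) := by ring
    · rw [e1]
      calc fb (-Λ (-j-1)) * (-Λ (-j-1) - -Λ (-j))
          = fb (-Λ (-j-1)) * (Λ (-j) - Λ (-j-1)) := by ring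
      _ ≤ α₂ := h2.le

set_option maxHeartbeats 1600000 in
theorem critical_density_of_gap_limits
    (S Sinv : ℝ → ℝ) (Λ M : ℤ → ℝ) (α : ℝ) (hα : 0 < α)
    (hnn : ∀ t ≥ (0:ℝ), 0 ≤ S t) (hS0 : S 0 = 0)
    (hmono : StrictMonoOn S (Ici 0))
    (hC1 : ContDiffOn ℝ 1 S (Ici 0))
    (hunbdd : ∀ m : ℝ, ∃ t ≥ (0:ℝ), m < S t)
    (hinv_left : ∀ t ≥ (0:ℝ), Sinv (S t) = t)
    (hinv_right : ∀ y ≥ (0:ℝ), 0 ≤ Sinv y ∧ S (Sinv y) = y)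
    (hΛmono : StrictMono Λ) (hMmono : StrictMono M)
    (hΛtop : Tendsto Λ atTop atTop) (hΛbot : Tendsto Λ atBot atBot)
    (hMtop : Tendsto M atTop atTop) (hMbot : Tendsto M atBot atBot)
    (hgapΛtop : Tendsto (fun j : ℤ => S |Λ j| * (Λ (j + 1) - Λ j)) atTop (nhds α))
    (hgapΛbot : Tendsto (fun j : ℤ => S |Λ j| * (Λ (j + 1) - Λ j)) atBot (nhds α))
    (hgapMtop : Tendsto (fun j : ℤ => Sinv |M j| * (M (j + 1) - M j)) atTop (nhds α))
    (hgapMbot : Tendsto (fun j : ℤ => Sinv |M j| * (M (j + 1) - M j)) atBot (nhds α)) :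
    Tendsto (fun K : ℝ =>
        sInf {r : ℝ | ∃ W ≥ K, ∃ T ≥ K,
          r = ((Nat.card {j : ℤ | Λ j ∈ Icc (-T) T} : ℝ) +
               (Nat.card {j : ℤ | M j ∈ Icc (-W) W} : ℝ)) / (4 * W * T)})
      atTop (nhds (1 / (2 * α))) := by
  have hScont : ContinuousOn S (Ici 0) := hC1.continuousOn
  have hSmonoOn : MonotoneOn S (Ici 0) := hmono.monotoneOn
  set Sb : ℝ → ℝ := fun t => S (max t 0) with hSbdef
  set SIb : ℝ → ℝ := fun t => Sinv (max t 0) with hSIbdef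
  have hSb_mono : Monotone Sb := fun a b hab =>
    hSmonoOn (le_max_right a 0) (le_max_right b 0) (max_le_max hab le_rfl)
  have hSb_nn : ∀ t, 0 ≤ Sb t := fun t => hnn _ (le_max_right t 0)
  have hSb_eq : ∀ t : ℝ, 0 ≤ t → Sb t = S t := fun t ht => by
    rw [hSbdef]; simp only [max_eq_left ht]
  have hSinv_mono : ∀ a b : ℝ, 0 ≤ a → a ≤ b → Sinv a ≤ Sinv b := by
    intro a b ha hab
    by_contra h
    push_neg at h
    have hb0 : 0 ≤ b := le_trans ha hab
    have h2 := hmono (hinv_right b hb0).1 (hinv_right a ha).1 h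
    rw [(hinv_right b hb0).2, (hinv_right a ha).2] at h2
    linarith
  have hSIb_mono : Monotone SIb := fun a b hab =>
    hSinv_mono _ _ (le_max_right a 0) (max_le_max hab le_rfl)
  have hSIb_nn : ∀ t, 0 ≤ SIb t := fun t => (hinv_right _ (le_max_right t 0)).1
  have hSIb_eq : ∀ t : ℝ, 0 ≤ t → SIb t = Sinv t := fun t ht => by
    rw [hSIbdef]; simp only [max_eq_left ht]
  have hgal : ∀ x y : ℝ, 0 ≤ x → 0 ≤ y → (Sb x ≤ y ↔ x ≤ SIb y) := by
    intro x y hx hy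
    rw [hSb_eq x hx, hSIb_eq y hy]
    constructor
    · intro h
      calc x = Sinv (S x) := (hinv_left x hx).symm
      _ ≤ Sinv y := hSinv_mono _ _ (hnn x hx) h
    · intro h
      calc S x ≤ S (Sinv y) := hSmonoOn hx (hinv_right y hy).1 h
      _ = y := (hinv_right y hy).2
  have hs₀S : 0 < S 1 := by
    have := hmono (self_mem_Ici) (by norm_num : (1:ℝ) ∈ Ici (0:ℝ)) one_pos
    linarith [hS0, this]
  have hs₀I : 0 < Sinv 1 := by
    rcases (hinv_right 1 zero_le_one) with ⟨h0, h1⟩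
    rcases h0.lt_or_eq with h | h
    · exact h
    · exfalso; rw [← h] at h1; rw [hS0] at h1; norm_num at h1
  have hsS : ∀ t : ℝ, 1 ≤ t → S 1 ≤ Sb t := fun t ht => by
    rw [hSb_eq t (by linarith)]
    exact hSmonoOn (by norm_num) (by simp only [mem_Ici]; linarith) ht
  have hsI : ∀ t : ℝ, 1 ≤ t → Sinv 1 ≤ SIb t := fun t ht => by
    rw [hSIb_eq t (by linarith)]
    exact hSinv_mono _ _ zero_le_one ht
  rw [Metric.tendsto_atTop]
  intro δ hδ
  set ε := min (1/2 : ℝ) (α * δ / 4) with hεdef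
  have hε0 : 0 < ε := lt_min (by norm_num) (by positivity)
  have hε12 : ε ≤ 1/2 := min_le_left _ _
  have hεαδ : ε ≤ α * δ / 4 := min_le_right _ _
  set α₁ := α * (1 - ε) with hα₁def
  set α₂ := α * (1 + ε) with hα₂def
  have hα₁0 : 0 < α₁ := mul_pos hα (by linarith)
  have hα₂0 : 0 < α₂ := mul_pos hα (by linarith)
  have hα₁α : α₁ < α := by
    rw [hα₁def]; nlinarith
  have hα₂α : α < α₂ := by
    rw [hα₂def]; nlinarith
  have hup : 1/(2*α₁) ≤ 1/(2*α) + δ/4 := by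
    rw [div_le_iff₀ (by positivity)]
    have he : (1/(2*α) + δ/4) * (2*α₁) = (1-ε) + δ*α*(1-ε)/2 := by
      rw [hα₁def]; field_simp; ring
    rw [he]
    nlinarith [mul_nonneg hα.le hδ.le]
  have hlo : 1/(2*α) - δ/8 ≤ 1/(2*α₂) := by
    have key : 1/(2*α) - 1/(2*α₂) = ε/(2*α*(1+ε)) := by
      rw [hα₂def]; field_simp; ring
    have h1 : ε/(2*α*(1+ε)) ≤ ε/(2*α) :=
      div_le_div_of_nonneg_left hε0.le (by positivity) (by nlinarith)
    have h2 : ε/(2*α) ≤ δ/8 := by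
      rw [div_le_iff₀ (by positivity)]
      linarith
    linarith
  -- extract J's from the gap hypotheses
  have hevΛt : ∀ᶠ j : ℤ in atTop, S |Λ j| * (Λ (j+1) - Λ j) ∈ Ioo α₁ α₂ :=
    hgapΛtop (Ioo_mem_nhds hα₁α hα₂α)
  have hevΛb : ∀ᶠ j : ℤ in atBot, S |Λ j| * (Λ (j+1) - Λ j) ∈ Ioo α₁ α₂ :=
    hgapΛbot (Ioo_mem_nhds hα₁α hα₂α)
  have hevMt : ∀ᶠ j : ℤ in atTop, Sinv |M j| * (M (j+1) - M j) ∈ Ioo α₁ α₂ :=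
    hgapMtop (Ioo_mem_nhds hα₁α hα₂α)
  have hevMb : ∀ᶠ j : ℤ in atBot, Sinv |M j| * (M (j+1) - M j) ∈ Ioo α₁ α₂ :=
    hgapMbot (Ioo_mem_nhds hα₁α hα₂α)
  have habsS : ∀ t : ℝ, 1 ≤ t → (fun u => S |u|) t = Sb t := fun t ht => by
    simp only []
    rw [abs_of_nonneg (by linarith : (0:ℝ) ≤ t), hSb_eq t (by linarith)]
  have habsS' : ∀ t : ℝ, 1 ≤ t → (fun u => S |u|) (-t) = Sb t := fun t ht => by
    simp only []
    rw [abs_neg, abs_of_nonneg (by linarith : (0:ℝ) ≤ t), hSb_eq t (by linarith)]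
  have habsI : ∀ t : ℝ, 1 ≤ t → (fun u => Sinv |u|) t = SIb t := fun t ht => by
    simp only []
    rw [abs_of_nonneg (by linarith : (0:ℝ) ≤ t), hSIb_eq t (by linarith)]
  have habsI' : ∀ t : ℝ, 1 ≤ t → (fun u => Sinv |u|) (-t) = SIb t := fun t ht => by
    simp only []
    rw [abs_neg, abs_of_nonneg (by linarith : (0:ℝ) ≤ t), hSIb_eq t (by linarith)]
  obtain ⟨Jp, hJpge, hJp1, hJpgap⟩ :=
    side_package_top (fun u => S |u|) Sb habsS Λ hΛmono.monotone hΛtop α₁ α₂ hevΛt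
  obtain ⟨Jn, hJnge, hJn1, hJngap⟩ :=
    side_package_bot (fun u => S |u|) Sb habsS' Λ hΛmono.monotone hΛbot α₁ α₂ hevΛb
  obtain ⟨Ip, hIpge, hIp1, hIpgap⟩ :=
    side_package_top (fun u => Sinv |u|) SIb habsI M hMmono.monotone hMtop α₁ α₂ hevMt
  obtain ⟨In, hInge, hIn1, hIngap⟩ :=
    side_package_bot (fun u => Sinv |u|) SIb habsI' M hMmono.monotone hMbot α₁ α₂ hevMb
  -- reflected sequences
  have hxnΛ_mono : StrictMono (fun j : ℤ => -Λ (-j)) := by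
    intro a b hab
    simp only [neg_lt_neg_iff]
    exact hΛmono (by omega)
  have hxnΛ_top : Tendsto (fun j : ℤ => -Λ (-j)) atTop atTop := by
    have h1 : Tendsto (fun j : ℤ => -j) atTop atBot := tendsto_neg_atTop_atBot
    have h2 : Tendsto (fun j : ℤ => Λ (-j)) atTop atBot := hΛbot.comp h1
    exact tendsto_neg_atBot_atTop.comp h2
  have hxnM_mono : StrictMono (fun j : ℤ => -M (-j)) := by
    intro a b hab
    simp only [neg_lt_neg_iff]
    exact hMmono (by omega)
  have hxnM_top : Tendsto (fun j : ℤ => -M (-j)) atTop atTop := by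
    have h1 : Tendsto (fun j : ℤ => -j) atTop atBot := tendsto_neg_atTop_atBot
    have h2 : Tendsto (fun j : ℤ => M (-j)) atTop atBot := hMbot.comp h1
    exact tendsto_neg_atBot_atTop.comp h2
  -- constants
  obtain ⟨G1, hG1def⟩ : ∃ x : ℝ, x = α₂ / S 1 := ⟨_, rfl⟩
  obtain ⟨G2, hG2def⟩ : ∃ x : ℝ, x = α₂ / Sinv 1 := ⟨_, rfl⟩
  have hG1nn : 0 ≤ G1 := by rw [hG1def]; exact le_of_lt (div_pos hα₂0 hs₀S)
  have hG2nn : 0 ≤ G2 := by rw [hG2def]; exact le_of_lt (div_pos hα₂0 hs₀I)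
  obtain ⟨CΛ, hCΛdef⟩ : ∃ x : ℝ, x = Λ Jp + -Λ (-Jn) + 4*G1 := ⟨_, rfl⟩
  obtain ⟨CM, hCMdef⟩ : ∃ x : ℝ, x = M Ip + -M (-In) + 4*G2 := ⟨_, rfl⟩
  have hCΛnn : 0 ≤ CΛ := by rw [hCΛdef]; linarith [hG1nn]
  have hCMnn : 0 ≤ CM := by rw [hCMdef]; linarith [hG2nn]
  obtain ⟨c₀, hc₀def⟩ : ∃ x : ℝ, x = ((Jp:ℝ) + (Jn:ℝ) + 1) + ((Ip:ℝ) + (In:ℝ) + 1) := ⟨_, rfl⟩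
  have hJpr : (1:ℝ) ≤ (Jp:ℝ) := by exact_mod_cast hJpge
  have hJnr : (1:ℝ) ≤ (Jn:ℝ) := by exact_mod_cast hJnge
  have hIpr : (1:ℝ) ≤ (Ip:ℝ) := by exact_mod_cast hIpge
  have hInr : (1:ℝ) ≤ (In:ℝ) := by exact_mod_cast hInge
  have hc₀nn : 0 ≤ c₀ := by rw [hc₀def]; linarith
  obtain ⟨K₀, hK₀def⟩ : ∃ x : ℝ, x = 1 + (Λ Jp + -Λ (-Jn) + M Ip + -M (-In))
      + 2*(CΛ + CM)/(α₂*δ) + 4*(G1+G2)/(α₁*δ) + 2*c₀/δ := ⟨_, rfl⟩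
  have hterm1 : (0:ℝ) ≤ Λ Jp + -Λ (-Jn) + M Ip + -M (-In) := by linarith
  have hterm2 : (0:ℝ) ≤ 2*(CΛ + CM)/(α₂*δ) :=
    div_nonneg (by linarith [hCΛnn, hCMnn]) (by positivity)
  have hterm3 : (0:ℝ) ≤ 4*(G1+G2)/(α₁*δ) :=
    div_nonneg (by linarith [hG1nn, hG2nn]) (by positivity)
  have hterm4 : (0:ℝ) ≤ 2*c₀/δ := div_nonneg (by linarith [hc₀nn]) hδ.le
  refine ⟨K₀, fun K hK => ?_⟩
  have hK1 : (1:ℝ) ≤ K := by rw [hK₀def] at hK; linarith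
  have hKΛp : Λ Jp ≤ K := by rw [hK₀def] at hK; linarith
  have hKΛn : -Λ (-Jn) ≤ K := by rw [hK₀def] at hK; linarith
  have hKMp : M Ip ≤ K := by rw [hK₀def] at hK; linarith
  have hKMn : -M (-In) ≤ K := by rw [hK₀def] at hK; linarith
  have hKC : 2*(CΛ + CM)/(α₂*δ) ≤ K := by rw [hK₀def] at hK; linarith
  have hKG : 4*(G1+G2)/(α₁*δ) ≤ K := by rw [hK₀def] at hK; linarith
  have hKc : 2*c₀/δ ≤ K := by rw [hK₀def] at hK; linarith
  have quad : ∀ W T : ℝ, K ≤ W → K ≤ T →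
      ∃ n1 n2 m1 m2 : ℝ,
        0 ≤ n1 ∧ 0 ≤ n2 ∧ 0 ≤ m1 ∧ 0 ≤ m2 ∧
        (n1 + n2 ≤ (Nat.card {j : ℤ | Λ j ∈ Icc (-T) T} : ℝ)) ∧
        ((Nat.card {j : ℤ | Λ j ∈ Icc (-T) T} : ℝ) ≤ n1 + n2 + ((Jp:ℝ)+(Jn:ℝ)+1)) ∧
        (m1 + m2 ≤ (Nat.card {j : ℤ | M j ∈ Icc (-W) W} : ℝ)) ∧
        ((Nat.card {j : ℤ | M j ∈ Icc (-W) W} : ℝ) ≤ m1 + m2 + ((Ip:ℝ)+(In:ℝ)+1)) ∧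
        (2*(W*T) ≤ α₂*(n1+n2+m1+m2) + W*CΛ + T*CM) ∧
        (Sb T ≤ W → SIb W ≤ T → α₁*(n1+n2+m1+m2) ≤ 2*(W*T) + 2*G1*W + 2*G2*T) := by
    intro W T hKW hKT
    have hW0 : (0:ℝ) < W := lt_of_lt_of_le (lt_of_lt_of_le one_pos hK1) hKW
    have hT0 : (0:ℝ) < T := lt_of_lt_of_le (lt_of_lt_of_le one_pos hK1) hKT
    obtain ⟨P1, hP1J, hP1le, hP1max, hA1, hB1⟩ :=
      side_main Sb hSb_mono hSb_nn Λ hΛmono hΛtop α₁ α₂ (S 1) hα₁0 hs₀S Jp hJp1 hsS hJpgap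
        T W (le_trans hKΛp hKT) hW0
    obtain ⟨P2, hP2J, hP2le, hP2max, hA2, hB2⟩ :=
      side_main Sb hSb_mono hSb_nn (fun j : ℤ => -Λ (-j)) hxnΛ_mono hxnΛ_top α₁ α₂ (S 1)
        hα₁0 hs₀S Jn hJn1 hsS hJngap T W (le_trans hKΛn hKT) hW0
    obtain ⟨Q1, hQ1J, hQ1le, hQ1max, hA3, hB3⟩ :=
      side_main SIb hSIb_mono hSIb_nn M hMmono hMtop α₁ α₂ (Sinv 1) hα₁0 hs₀I Ip hIp1 hsI hIpgap
        W T (le_trans hKMp hKW) hT0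
    obtain ⟨Q2, hQ2J, hQ2le, hQ2max, hA4, hB4⟩ :=
      side_main SIb hSIb_mono hSIb_nn (fun j : ℤ => -M (-j)) hxnM_mono hxnM_top α₁ α₂ (Sinv 1)
        hα₁0 hs₀I In hIn1 hsI hIngap W T (le_trans hKMn hKW) hT0
    have harea := area_eq Sb SIb hSb_mono hSIb_mono hSb_nn hSIb_nn hgal T W hT0.le hW0.le
    obtain ⟨hcntΛlow, hcntΛup⟩ := count_bounds Λ T (le_trans hK1 hKT) Jp Jn P1 P2
      hJpge hJnge hP1J hP2J hΛmono.monotone hP1le hP1max hP2le hP2max hJp1 hJn1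
    obtain ⟨hcntMlow, hcntMup⟩ := count_bounds M W (le_trans hK1 hKW) Ip In Q1 Q2
      hIpge hInge hQ1J hQ2J hMmono.monotone hQ1le hQ1max hQ2le hQ2max hIp1 hIn1
    have hn1 : (0:ℝ) ≤ (P1:ℝ) - Jp := sub_nonneg.2 (by exact_mod_cast hP1J)
    have hn2 : (0:ℝ) ≤ (P2:ℝ) - Jn := sub_nonneg.2 (by exact_mod_cast hP2J)
    have hm1 : (0:ℝ) ≤ (Q1:ℝ) - Ip := sub_nonneg.2 (by exact_mod_cast hQ1J)
    have hm2 : (0:ℝ) ≤ (Q2:ℝ) - In := sub_nonneg.2 (by exact_mod_cast hQ2J)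
    refine ⟨(P1:ℝ)-Jp, (P2:ℝ)-Jn, (Q1:ℝ)-Ip, (Q2:ℝ)-In, hn1, hn2, hm1, hm2,
      hcntΛlow, hcntΛup, hcntMlow, hcntMup, ?_, ?_⟩
    · rw [← hG1def] at hA1 hA2
      rw [← hG2def] at hA3 hA4
      rw [hCΛdef, hCMdef]
      linarith [hA1, hA2, hA3, hA4, harea]
    · intro hTW hWT
      rw [← hG1def] at hB1 hB2
      rw [← hG2def] at hB3 hB4
      have b1 := hB1 hTW
      have b2 := hB2 hTW
      have b3 := hB3 hWT
      have b4 := hB4 hWT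
      linarith [b1, b2, b3, b4, harea]
  -- abbreviate the constraint set
  set Q : Set ℝ := {r : ℝ | ∃ W ≥ K, ∃ T ≥ K,
      r = ((Nat.card {j : ℤ | Λ j ∈ Icc (-T) T} : ℝ) +
           (Nat.card {j : ℤ | M j ∈ Icc (-W) W} : ℝ)) / (4 * W * T)} with hQdef
  have hα₂δ : 0 ≤ α₂ * δ := mul_nonneg hα₂0.le hδ.le
  -- lower bound for every element of Q
  have hlow : ∀ r ∈ Q, 1/(2*α₂) - δ/4 ≤ r := by
    rintro r ⟨W, hWK, T, hTK, rfl⟩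
    have hW0 : (0:ℝ) < W := lt_of_lt_of_le (lt_of_lt_of_le one_pos hK1) hWK
    have hT0 : (0:ℝ) < T := lt_of_lt_of_le (lt_of_lt_of_le one_pos hK1) hTK
    obtain ⟨n1, n2, m1, m2, hn1, hn2, hm1, hm2, hNl, _, hMl, _, hkey, _⟩ := quad W T hWK hTK
    have hCsum : CΛ + CM ≤ K*(α₂*δ)/2 := by
      rw [div_le_iff₀ (by positivity)] at hKC
      linarith
    have e1 : CΛ ≤ α₂*δ*T/2 := by
      have h1 : K*(α₂*δ) ≤ T*(α₂*δ) := mul_le_mul_of_nonneg_right hTK hα₂δ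
      linarith [hCΛnn, hCMnn, hCsum, h1]
    have e2 : CM ≤ α₂*δ*W/2 := by
      have h1 : K*(α₂*δ) ≤ W*(α₂*δ) := mul_le_mul_of_nonneg_right hWK hα₂δ
      linarith [hCΛnn, hCMnn, hCsum, h1]
    have e3 : W*CΛ ≤ W*(α₂*δ*T/2) := mul_le_mul_of_nonneg_left e1 hW0.le
    have e4 : T*CM ≤ T*(α₂*δ*W/2) := mul_le_mul_of_nonneg_left e2 hT0.le
    have hWC : W*CΛ + T*CM ≤ α₂*δ*(W*T) := by
      have heq : W*(α₂*δ*T/2) + T*(α₂*δ*W/2) = α₂*δ*(W*T) := by ring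
      linarith only [e3, e4, heq]
    have hsum : n1+n2+m1+m2 ≤ (Nat.card {j : ℤ | Λ j ∈ Icc (-T) T} : ℝ)
        + (Nat.card {j : ℤ | M j ∈ Icc (-W) W} : ℝ) := by linarith
    have hmul : α₂*(n1+n2+m1+m2) ≤ α₂*((Nat.card {j : ℤ | Λ j ∈ Icc (-T) T} : ℝ)
        + (Nat.card {j : ℤ | M j ∈ Icc (-W) W} : ℝ)) :=
      mul_le_mul_of_nonneg_left hsum hα₂0.le
    rw [le_div_iff₀ (by positivity : (0:ℝ) < 4*W*T)]
    have expand : (1/(2*α₂) - δ/4)*(4*W*T) = (2*(W*T) - α₂*δ*(W*T))/α₂ := by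
      field_simp; ring
    rw [expand, div_le_iff₀ hα₂0]
    linarith [hkey, hWC, hmul]
  have hQne : Q.Nonempty := by
    rw [hQdef]
    exact ⟨_, K, le_refl K, K, le_refl K, rfl⟩
  have hbdd : BddBelow Q := ⟨1/(2*α₂) - δ/4, fun r hr => hlow r hr⟩
  have hsInf_lo : 1/(2*α₂) - δ/4 ≤ sInf Q := le_csInf hQne hlow
  -- upper bound: a good element
  obtain ⟨t₀, ht₀0, ht₀⟩ := hunbdd K
  set T := max K t₀ with hTdef
  have hTK : K ≤ T := le_max_left _ _
  have hT0 : (0:ℝ) < T := lt_of_lt_of_le (lt_of_lt_of_le one_pos hK1) hTK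
  set W := Sb T with hWdef
  have hWK : K ≤ W := by
    have h1 : S t₀ ≤ Sb T := by
      rw [hSb_eq T hT0.le]
      exact hSmonoOn (mem_Ici.2 ht₀0) (mem_Ici.2 hT0.le) (le_max_right _ _)
    rw [hWdef]
    linarith
  have hW0 : (0:ℝ) < W := lt_of_lt_of_le (lt_of_lt_of_le one_pos hK1) hWK
  have hSbTW : Sb T ≤ W := le_of_eq hWdef.symm
  have hSIbWT : SIb W ≤ T := by
    rw [hWdef]
    have h1 : SIb (Sb T) = Sinv (Sb T) := hSIb_eq _ (hSb_nn T)
    have h2 : Sb T = S T := hSb_eq T hT0.le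
    rw [h1, h2, hinv_left T hT0.le]
  obtain ⟨n1, n2, m1, m2, hn1, hn2, hm1, hm2, _, hNup, _, hMup, _, hkeyB⟩ := quad W T hWK hTK
  have hkey := hkeyB hSbTW hSIbWT
  have hmem : ((Nat.card {j : ℤ | Λ j ∈ Icc (-T) T} : ℝ) +
      (Nat.card {j : ℤ | M j ∈ Icc (-W) W} : ℝ)) / (4 * W * T) ∈ Q := by
    rw [hQdef]
    exact ⟨W, hWK, T, hTK, rfl⟩
  have hα₁δ : 0 ≤ α₁ * δ := mul_nonneg hα₁0.le hδ.le
  have hrup : ((Nat.card {j : ℤ | Λ j ∈ Icc (-T) T} : ℝ) +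
      (Nat.card {j : ℤ | M j ∈ Icc (-W) W} : ℝ)) / (4 * W * T) ≤ 1/(2*α₁) + δ/2 := by
    have hGsum : G1 + G2 ≤ K*(α₁*δ)/4 := by
      rw [div_le_iff₀ (by positivity)] at hKG
      linarith
    have e1 : G1 ≤ α₁*δ*T/4 := by
      have h1 : K*(α₁*δ) ≤ T*(α₁*δ) := mul_le_mul_of_nonneg_right hTK hα₁δ
      linarith [hG1nn, hG2nn, hGsum, h1]
    have e2 : G2 ≤ α₁*δ*W/4 := by
      have h1 : K*(α₁*δ) ≤ W*(α₁*δ) := mul_le_mul_of_nonneg_right hWK hα₁δ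
      linarith [hG1nn, hG2nn, hGsum, h1]
    have e3 : 2*G1*W ≤ W*(α₁*δ*T/2) := by
      have h := mul_le_mul_of_nonneg_left e1 hW0.le
      linarith [h]
    have e4 : 2*G2*T ≤ T*(α₁*δ*W/2) := by
      have h := mul_le_mul_of_nonneg_left e2 hT0.le
      linarith [h]
    have hKWT : K ≤ W*T := by
      have h1 : K*K ≤ W*T :=
        mul_le_mul hWK hTK (by linarith) (by linarith)
      have h2 : K*1 ≤ K*K := mul_le_mul_of_nonneg_left hK1 (by linarith)
      linarith
    have e5 : α₁*c₀ ≤ α₁*δ*(W*T) := by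
      have h1 : c₀ ≤ K*δ/2 := by
        rw [div_le_iff₀ hδ] at hKc
        linarith
      have h2 : K*δ ≤ (W*T)*δ := mul_le_mul_of_nonneg_right hKWT hδ.le
      have h3 : c₀ ≤ (W*T)*δ/2 := by linarith
      have h4 : α₁*c₀ ≤ α₁*((W*T)*δ/2) := mul_le_mul_of_nonneg_left h3 hα₁0.le
      have h5 : (0:ℝ) ≤ α₁*δ*(W*T) := by positivity
      have heq : α₁*((W*T)*δ/2) = α₁*δ*(W*T)/2 := by ring
      linarith only [h4, h5, heq]
    have hNle : (Nat.card {j : ℤ | Λ j ∈ Icc (-T) T} : ℝ) +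
        (Nat.card {j : ℤ | M j ∈ Icc (-W) W} : ℝ) ≤ (n1+n2+m1+m2) + c₀ := by
      rw [hc₀def]; linarith
    have hα₁N : α₁*((Nat.card {j : ℤ | Λ j ∈ Icc (-T) T} : ℝ) +
        (Nat.card {j : ℤ | M j ∈ Icc (-W) W} : ℝ)) ≤ 2*(W*T) + 2*α₁*δ*(W*T) := by
      have h6 := mul_le_mul_of_nonneg_left hNle hα₁0.le
      linarith [h6, hkey, e3, e4, e5]
    rw [div_le_iff₀ (by positivity : (0:ℝ) < 4*W*T)]
    have expand : (1/(2*α₁) + δ/2)*(4*W*T) = (2*(W*T) + 2*α₁*δ*(W*T))/α₁ := by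
      field_simp; ring
    rw [expand, le_div_iff₀ hα₁0]
    linarith [hα₁N]
  have hsInf_up : sInf Q ≤ 1/(2*α₁) + δ/2 := le_trans (csInf_le hbdd hmem) hrup
  rw [Real.dist_eq, abs_lt]
  constructor
  · linarith
  · linarith
end
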